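/- arXiv:2508.17915 — 8 statements merged into one kernel-verified Lean document; each statement's English description precedes it below -/
import Mathlib

section
/- Let a ≥ 1 and d ≥ 1 be integers, and let T_a be the (2a+1)×(2a+1) integer matrix with rows and columns indexed by 0,…,2a defined by T_a(i,j) = 2 if i+j < a or i+j > 3a, T_a(i,j) = 1 if |i−a| + |j−a| ≤ a, and T_a(i,j) = 0 otherwise. Then the (0,0)-entry of T_a^{d+1} equals (2a+1)^d + 2^d · F(d, a−1). -/
open Matrix Finset

/-- `FibPts d k` : the number of integer points `x = (x_1, …, x_d)` with
`0 ≤ x_i ≤ k` and `x_i + x_{i+1} ≤ k` for consecutive indices, i.e. the number of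
lattice points in the `k`-th dilation of the `d`-dimensional Fibonacci polytope. -/
noncomputable def FibPts (d k : ℕ) : ℕ :=
  Set.ncard {x : Fin d → ℤ | (∀ i, 0 ≤ x i ∧ x i ≤ (k : ℤ)) ∧
    ∀ i j : Fin d, (j : ℕ) = (i : ℕ) + 1 → x i + x j ≤ (k : ℤ)}

/-- The matrix `T_a` of size `(2a+1) × (2a+1)`. -/
def Tmat (a : ℕ) : Matrix (Fin (2*a+1)) (Fin (2*a+1)) ℤ :=
  Matrix.of fun i j =>
    if (i : ℕ) + (j : ℕ) < a ∨ 3*a < (i : ℕ) + (j : ℕ) then 2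
    else if |(i : ℤ) - (a : ℤ)| + |(j : ℤ) - (a : ℤ)| ≤ (a : ℤ) then 1
    else 0

def Mn (k : ℕ) : Matrix (Fin (k+1)) (Fin (k+1)) ℕ :=
  Matrix.of fun x y => if (x:ℕ) + (y:ℕ) ≤ k then 1 else 0

def Mz (k : ℕ) : Matrix (Fin (k+1)) (Fin (k+1)) ℤ := (Mn k).map (Nat.cast)

def Cd (k d : ℕ) (x : Fin d → Fin (k+1)) : Prop :=
  ∀ i j : Fin d, (j:ℕ) = (i:ℕ) + 1 → (x i : ℕ) + (x j : ℕ) ≤ k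

instance (k d : ℕ) (x : Fin d → Fin (k+1)) : Decidable (Cd k d x) := by
  unfold Cd; infer_instance

noncomputable def Bcard (k d : ℕ) (z : Fin (k+1)) : ℕ :=
  ∑ x : Fin d → Fin (k+1), if Cd k (d+1) (Fin.cons z x) then 1 else 0

lemma C_one (k : ℕ) (x : Fin 1 → Fin (k+1)) : Cd k 1 x := by
  intro i j h
  have := i.isLt; have := j.isLt
  omega

lemma consC (k d : ℕ) (z : Fin (k+1)) (x : Fin (d+1) → Fin (k+1)) :
    Cd k (d+2) (Fin.cons z x) ↔ ((z:ℕ) + (x 0 : ℕ) ≤ k ∧ Cd k (d+1) x) := by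
  constructor
  · intro h
    constructor
    · have h01 := h 0 1 (by simp)
      simpa using h01
    · intro i j hij
      have := h i.succ j.succ (by simp [hij])
      simpa using this
  · rintro ⟨h0, hC⟩ i j hij
    refine Fin.cases ?_ ?_ i hij
    · intro hj
      have hj' : j = Fin.succ 0 := by
        apply Fin.ext; simpa using hj
      subst hj'
      simpa using h0
    · intro i' hj
      refine Fin.cases ?_ ?_ j hj
      · intro hj0; simp at hj0
      · intro j' hj'
        have hj'' : (j' : ℕ) = (i' : ℕ) + 1 := by simpa using hj'
        have := hC i' j' hj''
        simpa using this

lemma sum_cons (k d : ℕ) (f : (Fin (d+1) → Fin (k+1)) → ℕ) :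
    ∑ x : Fin (d+1) → Fin (k+1), f x
      = ∑ y : Fin (k+1), ∑ x : Fin d → Fin (k+1), f (Fin.cons y x) := by
  rw [← Equiv.sum_comp (Fin.consEquiv (fun _ => Fin (k+1))) f, Fintype.sum_prod_type]
  rfl

lemma Bcard_zero (k : ℕ) (z : Fin (k+1)) : Bcard k 0 z = 1 := by
  simp [Bcard, C_one]

lemma Bcard_succ (k d : ℕ) (z : Fin (k+1)) :
    Bcard k (d+1) z = ∑ y : Fin (k+1), Mn k z y * Bcard k d y := by
  rw [Bcard, sum_cons]
  refine Finset.sum_congr rfl fun y _ => ?_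
  rw [Mn, Matrix.of_apply, Bcard, Finset.mul_sum]
  refine Finset.sum_congr rfl fun x _ => ?_
  have : Cd k (d+2) (Fin.cons z (Fin.cons y x)) ↔ ((z:ℕ) + (y:ℕ) ≤ k ∧ Cd k (d+1) (Fin.cons y x)) := by
    rw [consC]; simp
  rw [if_congr this rfl rfl]
  split_ifs with h1 h2 h3 <;> simp_all

lemma Bcard_eq (k d : ℕ) : Bcard k d = (Mn k)^d *ᵥ (fun _ => 1) := by
  induction d with
  | zero => funext z; simp [Bcard_zero]
  | succ d ih =>
    funext z
    rw [Bcard_succ, pow_succ', ← Matrix.mulVec_mulVec, ← ih]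
    simp [Matrix.mulVec, dotProduct]

lemma FibPts_card (d k : ℕ) :
    FibPts d k = ∑ x : Fin d → Fin (k+1), if Cd k d x then 1 else 0 := by
  rw [FibPts, ← Nat.card_coe_set_eq]
  have e : {x : Fin d → ℤ | (∀ i, 0 ≤ x i ∧ x i ≤ (k : ℤ)) ∧
      ∀ i j : Fin d, (j : ℕ) = (i : ℕ) + 1 → x i + x j ≤ (k : ℤ)} ≃
      {x : Fin d → Fin (k+1) // Cd k d x} := by
    refine ⟨fun p => ⟨fun i => ⟨(p.1 i).toNat, ?_⟩, ?_⟩, fun q => ⟨fun i => ((q.1 i : ℕ) : ℤ), ?_⟩, ?_, ?_⟩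
    · have h1 := p.2.1 i
      omega
    · intro i j hij
      have h1 := p.2.1 i; have h2 := p.2.1 j
      have h3 := p.2.2 i j hij
      simp only []
      omega
    · constructor
      · intro i
        constructor
        · positivity
        · dsimp only; exact_mod_cast Nat.lt_succ_iff.mp (q.1 i).isLt
      · intro i j hij
        have := q.2 i j hij
        dsimp only; exact_mod_cast this
    · intro p
      apply Subtype.ext
      funext i
      have h1 := p.2.1 i
      simp only []
      omega
    · intro q
      apply Subtype.ext
      funext i
      apply Fin.ext
      simp
  rw [Nat.card_congr e, Nat.card_eq_fintype_card, Fintype.card_subtype, Finset.card_filter]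

lemma FibPts_sum (k m : ℕ) :
    FibPts (m+1) k = ∑ z : Fin (k+1), Bcard k m z := by
  rw [FibPts_card, sum_cons]
  rfl

lemma FibPts_matrix (k m : ℕ) :
    FibPts (m+1) k = ∑ x : Fin (k+1), ∑ y : Fin (k+1), ((Mn k)^m) x y := by
  rw [FibPts_sum]
  refine Finset.sum_congr rfl fun z _ => ?_
  rw [Bcard_eq]
  simp [Matrix.mulVec, dotProduct]

def Emat (k : ℕ) : Matrix (Fin (2*(k+1)+1)) (Fin (k+1)) ℤ :=
  Matrix.of fun i x =>
    (if (i:ℕ) = (x:ℕ) then 1 else 0) - (if (i:ℕ) + (x:ℕ) = 2*(k+1) then 1 else 0)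

def Jmat (k : ℕ) : Matrix (Fin (2*(k+1)+1)) (Fin (2*(k+1)+1)) ℤ :=
  Matrix.of fun _ _ => 1

lemma sum_delta {N : ℕ} (c : ℕ) (f : Fin N → ℤ) :
    (∑ i : Fin N, (if (i:ℕ) = c then 1 else 0) * f i) = if h : c < N then f ⟨c, h⟩ else 0 := by
  split_ifs with h
  · have key : ∀ i : Fin N, (if (i:ℕ) = c then (1:ℤ) else 0) * f i
        = if i = ⟨c, h⟩ then f i else 0 := by
      intro i
      by_cases hi : i = (⟨c, h⟩ : Fin N)
      · subst hi; simp
      · rw [if_neg (by simpa [Fin.ext_iff] using hi), if_neg hi, zero_mul]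
    rw [Finset.sum_congr rfl (fun i _ => key i), Finset.sum_ite_eq']
    simp
  · refine Finset.sum_eq_zero fun i _ => ?_
    rw [if_neg (by have := i.isLt; omega), zero_mul]

/-- sum over rows against a column of E -/
lemma sumE_left (k : ℕ) (x : Fin (k+1)) (f : Fin (2*(k+1)+1) → ℤ) :
    (∑ i : Fin (2*(k+1)+1), Emat k i x * f i)
      = f ⟨x, by omega⟩ - f ⟨2*(k+1) - (x:ℕ), by omega⟩ := by
  have hx := x.isLt
  have key : ∀ i : Fin (2*(k+1)+1), Emat k i x * f i
      = (if (i:ℕ) = (x:ℕ) then 1 else 0) * f i - (if (i:ℕ) = 2*(k+1) - (x:ℕ) then 1 else 0) * f i := by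
    intro i
    rw [Emat, Matrix.of_apply, sub_mul]
    congr 2
    refine if_congr ?_ rfl rfl
    omega
  rw [Finset.sum_congr rfl (fun i _ => key i), Finset.sum_sub_distrib, sum_delta, sum_delta]
  rw [dif_pos (by omega), dif_pos (by omega)]

/-- sum over the Fin (k+1) index of E against a function -/
lemma sumE_right (k : ℕ) (i : Fin (2*(k+1)+1)) (g : Fin (k+1) → ℤ) :
    (∑ x : Fin (k+1), Emat k i x * g x)
      = (if h : (i:ℕ) < k+1 then g ⟨i, h⟩ else 0)
        - (if h : k+1 < (i:ℕ) then g ⟨2*(k+1) - (i:ℕ), by omega⟩ else 0) := by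
  have hi := i.isLt
  have key : ∀ x : Fin (k+1), Emat k i x * g x
      = (if (x:ℕ) = (i:ℕ) then 1 else 0) * g x - (if (x:ℕ) = 2*(k+1) - (i:ℕ) then 1 else 0) * g x := by
    intro x
    have hx := x.isLt
    rw [Emat, Matrix.of_apply, sub_mul]
    congr 2
    · refine if_congr ?_ rfl rfl; omega
    · refine if_congr ?_ rfl rfl; omega
  rw [Finset.sum_congr rfl (fun x _ => key x), Finset.sum_sub_distrib, sum_delta, sum_delta]
  congr 1
  by_cases h : k+1 < (i:ℕ)
  · rw [dif_pos h, dif_pos (show 2*(k+1) - (i:ℕ) < k+1 by omega)]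
  · rw [dif_neg h, dif_neg (show ¬ (2*(k+1) - (i:ℕ) < k+1) by omega)]

lemma EtE (k : ℕ) : (Emat k)ᵀ * Emat k = (2 : ℤ) • 1 := by
  ext x y
  rw [Matrix.mul_apply]
  have : ∀ i, (Emat k)ᵀ x i * Emat k i y = Emat k i x * Emat k i y := by
    intro i; rw [Matrix.transpose_apply]
  rw [Finset.sum_congr rfl (fun i _ => this i), sumE_left k x (fun i => Emat k i y)]
  have hx := x.isLt; have hy := y.isLt
  simp only [Emat, Matrix.of_apply, Matrix.smul_apply, Matrix.one_apply, Fin.ext_iff,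
    smul_eq_mul]
  split_ifs <;> omega

lemma JE (k : ℕ) : Jmat k * Emat k = 0 := by
  ext i x
  rw [Matrix.mul_apply]
  have : ∀ j, Jmat k i j * Emat k j x = Emat k j x * (1:ℤ) := by
    intro j; simp [Jmat]
  rw [Finset.sum_congr rfl (fun j _ => this j), sumE_left k x (fun _ => (1:ℤ))]
  simp

lemma EJ (k : ℕ) : (Emat k)ᵀ * Jmat k = 0 := by
  ext x i
  rw [Matrix.mul_apply]
  have : ∀ j, (Emat k)ᵀ x j * Jmat k j i = Emat k j x * (1:ℤ) := by
    intro j; simp [Jmat]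
  rw [Finset.sum_congr rfl (fun j _ => this j), sumE_left k x (fun _ => (1:ℤ))]
  simp

lemma abs_cond (a : ℕ) (i j : Fin (2*a+1)) :
    (|(i : ℤ) - (a : ℤ)| + |(j : ℤ) - (a : ℤ)| ≤ (a : ℤ)) ↔
      (a ≤ (i:ℕ) + (j:ℕ) ∧ (i:ℕ) + (j:ℕ) ≤ 3*a ∧ (j:ℕ) ≤ a + (i:ℕ) ∧ (i:ℕ) ≤ a + (j:ℕ)) := by
  rcases abs_cases ((i : ℤ) - (a : ℤ)) with ⟨h1, h2⟩ | ⟨h1, h2⟩ <;>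
    rcases abs_cases ((j : ℤ) - (a : ℤ)) with ⟨h3, h4⟩ | ⟨h3, h4⟩ <;>
      rw [h1, h3] <;> omega

lemma Smat_eq (k : ℕ) : Emat k * Mz k * (Emat k)ᵀ = Tmat (k+1) - Jmat k := by
  ext i j
  rw [Matrix.mul_apply]
  have step1 : ∀ y, (Emat k * Mz k) i y * (Emat k)ᵀ y j
      = Emat k j y * ((Emat k * Mz k) i y) := by
    intro y; rw [Matrix.transpose_apply, mul_comm]
  rw [Finset.sum_congr rfl (fun y _ => step1 y),
    sumE_right k j (fun y => (Emat k * Mz k) i y)]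
  have hEM : ∀ y : Fin (k+1), (Emat k * Mz k) i y
      = (if h : (i:ℕ) < k+1 then Mz k ⟨i, h⟩ y else 0)
        - (if h : k+1 < (i:ℕ) then Mz k ⟨2*(k+1) - (i:ℕ), by omega⟩ y else 0) := by
    intro y
    rw [Matrix.mul_apply]
    exact sumE_right k i (fun x => Mz k x y)
  have hi := i.isLt; have hj := j.isLt
  rw [Matrix.sub_apply, Tmat, Matrix.of_apply, Jmat, Matrix.of_apply]
  rw [if_congr (Iff.rfl) rfl (if_congr (abs_cond (k+1) i j) rfl rfl)]
  simp only [hEM]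
  simp only [Mz, Mn, Matrix.map_apply, Matrix.of_apply]
  split_ifs <;> push_cast <;> omega

lemma JJ (k : ℕ) : Jmat k * Jmat k = ((2*(k+1)+1 : ℕ) : ℤ) • Jmat k := by
  ext i j
  rw [Matrix.mul_apply]
  simp [Jmat, Finset.card_univ]

lemma pow_formula (k : ℕ) (m : ℕ) :
    Tmat (k+1) ^ (m+1)
      = ((2*(k+1)+1 : ℕ) : ℤ)^m • Jmat k
        + (2:ℤ)^m • (Emat k * (Mz k)^(m+1) * (Emat k)ᵀ) := by
  have hT : Tmat (k+1) = Jmat k + Emat k * Mz k * (Emat k)ᵀ := by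
    rw [Smat_eq]; abel
  induction m with
  | zero => simp only [zero_add, pow_one, pow_zero, one_smul]; exact hT
  | succ m ih =>
    rw [pow_succ', ih, hT, add_mul]
    simp only [Matrix.mul_add, Matrix.mul_smul]
    have e1 : Jmat k * (Emat k * (Mz k)^(m+1) * (Emat k)ᵀ) = 0 := by
      rw [← Matrix.mul_assoc, ← Matrix.mul_assoc, JE, Matrix.zero_mul, Matrix.zero_mul]
    have e2 : Emat k * Mz k * (Emat k)ᵀ * Jmat k = 0 := by
      rw [Matrix.mul_assoc, EJ, Matrix.mul_zero]
    have e3 : Emat k * Mz k * (Emat k)ᵀ * (Emat k * (Mz k)^(m+1) * (Emat k)ᵀ)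
        = (2:ℤ) • (Emat k * (Mz k)^(m+2) * (Emat k)ᵀ) := by
      calc Emat k * Mz k * (Emat k)ᵀ * (Emat k * (Mz k)^(m+1) * (Emat k)ᵀ)
          = Emat k * Mz k * ((Emat k)ᵀ * Emat k) * ((Mz k)^(m+1) * (Emat k)ᵀ) := by
            simp only [Matrix.mul_assoc]
        _ = (2:ℤ) • (Emat k * (Mz k)^(m+2) * (Emat k)ᵀ) := by
            rw [EtE, Matrix.mul_smul, Matrix.smul_mul, Matrix.mul_one]
            congr 1
            rw [Matrix.mul_assoc, ← Matrix.mul_assoc (Mz k), ← pow_succ']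
            rw [← Matrix.mul_assoc]
    rw [e1, e2, e3, JJ, smul_zero, smul_zero, add_zero, zero_add, smul_smul, smul_smul,
      ← pow_succ, ← pow_succ]

lemma EXE00 (k : ℕ) (N : Matrix (Fin (k+1)) (Fin (k+1)) ℤ) :
    (Emat k * N * (Emat k)ᵀ) 0 0 = N 0 0 := by
  rw [Matrix.mul_apply]
  have step1 : ∀ y, (Emat k * N) 0 y * (Emat k)ᵀ y 0
      = Emat k 0 y * ((Emat k * N) 0 y) := by
    intro y; rw [Matrix.transpose_apply, mul_comm]
  rw [Finset.sum_congr rfl (fun y _ => step1 y),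
    sumE_right k 0 (fun y => (Emat k * N) 0 y)]
  rw [dif_pos (by simp), dif_neg (by simp), sub_zero]
  simp only [Fin.val_zero, Fin.mk_zero]
  rw [Matrix.mul_apply, sumE_right k 0 (fun x => N x 0)]
  rw [dif_pos (by simp), dif_neg (by simp), sub_zero]
  simp only [Fin.val_zero, Fin.mk_zero]


lemma Mz_left (k : ℕ) (y : Fin (k+1)) : Mz k 0 y = 1 := by
  simp [Mz, Mn, Nat.lt_succ_iff.mp y.isLt]

lemma Mz_right (k : ℕ) (y : Fin (k+1)) : Mz k y 0 = 1 := by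
  simp [Mz, Mn, Nat.lt_succ_iff.mp y.isLt]

lemma Mz_pow_00 (k m : ℕ) :
    (Mz k ^ (m+2)) 0 0 = ∑ x : Fin (k+1), ∑ y : Fin (k+1), ((Mz k)^m) x y := by
  have h : Mz k ^ (m+2) = Mz k * (Mz k ^ m * Mz k) := by
    rw [← pow_succ, ← pow_succ']
  rw [h, Matrix.mul_apply]
  refine Finset.sum_congr rfl fun x _ => ?_
  rw [Mz_left k x, one_mul, Matrix.mul_apply]
  refine Finset.sum_congr rfl fun y _ => ?_
  rw [Mz_right k y, mul_one]

lemma Mz_pow (k m : ℕ) : (Mz k)^m = ((Mn k)^m).map (Nat.cast : ℕ → ℤ) := by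
  have h : Mz k = (Nat.castRingHom ℤ).mapMatrix (Mn k) := by
    rw [RingHom.mapMatrix_apply]; rfl
  rw [h, ← map_pow, RingHom.mapMatrix_apply]
  rfl

lemma final_count (k m : ℕ) : (Mz k ^ (m+2)) 0 0 = (FibPts (m+1) k : ℤ) := by
  rw [Mz_pow_00, FibPts_matrix, Mz_pow]
  push_cast
  simp [Matrix.map_apply]

theorem stmt0 (a d : ℕ) (ha : 1 ≤ a) (hd : 1 ≤ d) :
    (Tmat a ^ (d+1)) 0 0 = (2*(a : ℤ)+1)^d + 2^d * (FibPts d (a-1) : ℤ) := by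
  obtain ⟨k, rfl⟩ : ∃ k, a = k + 1 := ⟨a - 1, by omega⟩
  obtain ⟨m, rfl⟩ : ∃ m, d = m + 1 := ⟨d - 1, by omega⟩
  rw [pow_formula k (m+1)]
  rw [Matrix.add_apply, Matrix.smul_apply, Matrix.smul_apply]
  have hJ : Jmat k 0 0 = 1 := rfl
  rw [hJ, smul_eq_mul, smul_eq_mul, mul_one, EXE00]
  have h2 : (m + 1 + 1) = m + 2 := rfl
  rw [h2, final_count k m]
  have hk : k + 1 - 1 = k := by omega
  rw [hk]
  push_cast
  ring
end

section
/- Let a ≥ 1 and d ≥ 2 be integers, and let N_a be the (2a+1)×(2a+1) integer matrix with rows and columns indexed by 0,…,2a defined by N_a(i,j) = 1 if |i−a| + |j−a| ≤ a and N_a(i,j) = 0 otherwise. Then the (0,0)-entry of N_a^{d+1} equals E(d−2, a). -/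
/-- `ExtFibPts d k` : the number of integer points `x = (x_1, …, x_d)` with
`|x_i| ≤ k` and `|x_i| + |x_{i+1}| ≤ k` for consecutive indices, i.e. the number of
lattice points in the `k`-th dilation of the `d`-dimensional extended Fibonacci polytope. -/
noncomputable def ExtFibPts (d k : ℕ) : ℕ :=
  Set.ncard {x : Fin d → ℤ | (∀ i, |x i| ≤ (k : ℤ)) ∧
    ∀ i j : Fin d, (j : ℕ) = (i : ℕ) + 1 → |x i| + |x j| ≤ (k : ℤ)}

/-- The matrix `N_a` of size `(2a+1) × (2a+1)`: entry `1` in the middle rhombus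
`|i−a| + |j−a| ≤ a`, and `0` otherwise. -/
def Nmat (a : ℕ) : Matrix (Fin (2*a+1)) (Fin (2*a+1)) ℤ :=
  Matrix.of fun i j =>
    if |(i : ℤ) - (a : ℤ)| + |(j : ℤ) - (a : ℤ)| ≤ (a : ℤ) then 1 else 0

open scoped Classical

/-- the middle index -/
def av (a : ℕ) : Fin (2*a+1) := ⟨a, by omega⟩

/-- the adjacency relation of `Nmat` -/
def Q (a : ℕ) (j k : Fin (2*a+1)) : Prop :=
  |(j : ℤ) - (a : ℤ)| + |(k : ℤ) - (a : ℤ)| ≤ (a : ℤ)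

lemma Nmat_apply (a : ℕ) (j k : Fin (2*a+1)) :
    Nmat a j k = if Q a j k then 1 else 0 := by
  show (if |(j : ℤ) - (a : ℤ)| + |(k : ℤ) - (a : ℤ)| ≤ (a : ℤ) then (1:ℤ) else 0) = _
  exact if_congr Iff.rfl rfl rfl

lemma av_cast (a : ℕ) : ((av a : Fin (2*a+1)) : ℤ) = (a : ℤ) := by
  simp [av]

lemma Q_av_left (a : ℕ) (r : Fin (2*a+1)) : Q a (av a) r := by
  unfold Q
  have hr : (r : ℤ) < 2*a+1 := by exact_mod_cast r.isLt
  have hr0 : (0:ℤ) ≤ (r:ℤ) := by positivity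
  rw [av_cast, sub_self, abs_zero, zero_add, abs_le]
  omega

lemma Q_av_right (a : ℕ) (r : Fin (2*a+1)) : Q a r (av a) := by
  unfold Q
  have hr : (r : ℤ) < 2*a+1 := by exact_mod_cast r.isLt
  have hr0 : (0:ℤ) ≤ (r:ℤ) := by positivity
  rw [av_cast, sub_self, abs_zero, add_zero, abs_le]
  omega

/-- chain condition -/
def chain (a m : ℕ) (x : Fin m → Fin (2*a+1)) : Prop :=
  ∀ i j : Fin m, (j : ℕ) = (i : ℕ) + 1 → Q a (x i) (x j)

noncomputable def Fset (a m : ℕ) : Finset (Fin m → Fin (2*a+1)) :=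
  Finset.univ.filter (chain a m)

noncomputable def Gset (a m : ℕ) (q : Fin (2*a+1)) : Finset (Fin (m+1) → Fin (2*a+1)) :=
  Finset.univ.filter (fun x => chain a (m+1) x ∧ x (Fin.last m) = q)

lemma chain_init {a m : ℕ} {x : Fin (m+1) → Fin (2*a+1)} (h : chain a (m+1) x) :
    chain a m (Fin.init x) := by
  intro i j hij
  have := h i.castSucc j.castSucc (by simpa using hij)
  simpa [Fin.init] using this

lemma chain_snoc {a m : ℕ} {y : Fin m → Fin (2*a+1)} {q : Fin (2*a+1)}
    (hy : chain a m y) (hq : ∀ i : Fin m, (i : ℕ) + 1 = m → Q a (y i) q) :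
    chain a (m+1) (Fin.snoc y q) := by
  intro i j hij
  have hj : (j : ℕ) ≤ m := Nat.lt_succ_iff.mp j.isLt
  rcases lt_or_eq_of_le hj with hjm | hjm
  · have him : (i : ℕ) < m := by omega
    have hi' : i = Fin.castSucc ⟨i, him⟩ := by ext; simp
    have hj' : j = Fin.castSucc ⟨j, hjm⟩ := by ext; simp
    rw [hi', hj', Fin.snoc_castSucc, Fin.snoc_castSucc]
    exact hy ⟨i, him⟩ ⟨j, hjm⟩ (by simp only [Fin.val_mk]; omega)
  · have hjlast : j = Fin.last m := by ext; simpa using hjm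
    have him : (i : ℕ) < m := by omega
    have hi' : i = Fin.castSucc ⟨i, him⟩ := by ext; simp
    rw [hjlast, Fin.snoc_last, hi', Fin.snoc_castSucc]
    exact hq ⟨i, him⟩ (by simp only [Fin.val_mk]; omega)

lemma Gcard_zero (a : ℕ) (q : Fin (2*a+1)) : (Gset a 0 q).card = 1 := by
  rw [Finset.card_eq_one]
  refine ⟨fun _ => q, ?_⟩
  ext f
  simp only [Gset, Finset.mem_filter, Finset.mem_univ, true_and, Finset.mem_singleton]
  constructor
  · rintro ⟨-, hf⟩
    funext i
    have : i = Fin.last 0 := by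
      ext
      simp only [Fin.last]
      omega
    rw [this, hf]
  · rintro rfl
    refine ⟨?_, rfl⟩
    intro i j hij
    have hi : (i : ℕ) = 0 := by omega
    have hj : (j : ℕ) < 1 := j.isLt
    omega

lemma Gcard_succ (a m : ℕ) (q : Fin (2*a+1)) :
    (Gset a (m+1) q).card = ∑ r, if Q a r q then (Gset a m r).card else 0 := by
  rw [Finset.card_eq_sum_card_fiberwise
    (f := fun x => x (Fin.castSucc (Fin.last m))) (t := Finset.univ)
    (fun x _ => Finset.mem_univ _)]
  refine Finset.sum_congr rfl fun r _ => ?_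
  by_cases hQ : Q a r q
  · rw [if_pos hQ]
    refine Finset.card_bij' (fun x _ => Fin.init x) (fun y _ => Fin.snoc y q)
      ?_ ?_ ?_ ?_
    · intro x hx
      simp only [Finset.mem_filter, Gset, Finset.mem_univ, true_and] at hx ⊢
      obtain ⟨⟨hc, hlast⟩, hscl⟩ := hx
      refine ⟨chain_init hc, ?_⟩
      simpa [Fin.init] using hscl
    · intro y hy
      simp only [Finset.mem_filter, Gset, Finset.mem_univ, true_and] at hy ⊢
      obtain ⟨hc, hlast⟩ := hy
      refine ⟨⟨?_, ?_⟩, ?_⟩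
      · refine chain_snoc hc ?_
        intro i hi
        have : i = Fin.last m := by ext; simpa using hi
        rw [this, hlast]; exact hQ
      · simp
      · simpa using hlast
    · intro x hx
      simp only [Finset.mem_filter, Gset, Finset.mem_univ, true_and] at hx
      obtain ⟨⟨hc, hlast⟩, hscl⟩ := hx
      have h := Fin.snoc_init_self x
      rwa [hlast] at h
    · intro y hy
      simp
  · rw [if_neg hQ]
    rw [Finset.card_eq_zero, Finset.eq_empty_iff_forall_notMem]
    intro x hx
    simp only [Finset.mem_filter, Gset, Finset.mem_univ, true_and] at hx
    obtain ⟨⟨hc, hlast⟩, hscl⟩ := hx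
    apply hQ
    have := hc (Fin.castSucc (Fin.last m)) (Fin.last (m+1)) (by simp)
    rwa [hscl, hlast] at this

lemma pow_av (a m : ℕ) (q : Fin (2*a+1)) :
    (Nmat a ^ (m+1)) (av a) q = ((Gset a m q).card : ℤ) := by
  induction m generalizing q with
  | zero =>
    rw [pow_one, Gcard_zero, Nmat_apply, if_pos (Q_av_left a q)]
    simp
  | succ m ih =>
    rw [pow_succ, Matrix.mul_apply, Gcard_succ]
    push_cast
    refine Finset.sum_congr rfl fun r _ => ?_
    rw [ih r, Nmat_apply]
    split <;> simp

lemma Gcard_av (a m : ℕ) : (Gset a m (av a)).card = (Fset a m).card := by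
  refine Finset.card_bij' (fun x _ => Fin.init x) (fun y _ => Fin.snoc y (av a))
    ?_ ?_ ?_ ?_
  · intro x hx
    simp only [Finset.mem_filter, Gset, Fset, Finset.mem_univ, true_and] at hx ⊢
    exact chain_init hx.1
  · intro y hy
    simp only [Finset.mem_filter, Gset, Fset, Finset.mem_univ, true_and] at hy ⊢
    refine ⟨chain_snoc hy fun i _ => Q_av_right a _, by simp⟩
  · intro x hx
    simp only [Finset.mem_filter, Gset, Finset.mem_univ, true_and] at hx
    have h := Fin.snoc_init_self x
    rwa [hx.2] at h
  · intro y hy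
    simp

lemma extFibPts_eq (a m : ℕ) : ExtFibPts m a = (Fset a m).card := by
  have hinj : Function.Injective
      (fun z : Fin m → Fin (2*a+1) => fun i => (z i : ℤ) - (a : ℤ)) := by
    intro z w h
    funext i
    have := congrFun h i
    simp only [sub_left_inj] at this
    exact Fin.ext (by exact_mod_cast this)
  have himg : {x : Fin m → ℤ | (∀ i, |x i| ≤ (a : ℤ)) ∧
      ∀ i j : Fin m, (j : ℕ) = (i : ℕ) + 1 → |x i| + |x j| ≤ (a : ℤ)} =
      (fun z : Fin m → Fin (2*a+1) => fun i => (z i : ℤ) - (a : ℤ)) '' ↑(Fset a m) := by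
    ext x
    constructor
    · rintro ⟨h1, h2⟩
      have hb : ∀ i, (x i + a).toNat < 2*a+1 := by
        intro i
        have h := h1 i
        rw [abs_le] at h
        omega
      refine ⟨fun i => ⟨(x i + a).toNat, hb i⟩, ?_, ?_⟩
      · have hz : ∀ i, ((((x i + a).toNat : ℕ)) : ℤ) = x i + a := by
          intro i
          have h := h1 i
          rw [abs_le] at h
          omega
        simp only [Finset.coe_filter, Fset, Finset.mem_univ, true_and, Set.mem_setOf_eq]
        intro i j hij
        unfold Q
        simp only [hz, add_sub_cancel_right]
        exact h2 i j hij
      · funext i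
        have h := h1 i
        rw [abs_le] at h
        simp only
        omega
    · rintro ⟨z, hz, rfl⟩
      simp only [Finset.coe_filter, Fset, Finset.mem_univ, true_and, Set.mem_setOf_eq] at hz
      constructor
      · intro i
        have h1 : ((z i : ℕ) : ℤ) < 2*a+1 := by exact_mod_cast (z i).isLt
        have h2 : (0:ℤ) ≤ ((z i : ℕ) : ℤ) := by positivity
        show |((z i : ℕ) : ℤ) - (a:ℤ)| ≤ (a:ℤ)
        rw [abs_le]
        constructor <;> omega
      · intro i j hij
        show |((z i : ℕ) : ℤ) - (a:ℤ)| + |((z j : ℕ) : ℤ) - (a:ℤ)| ≤ (a:ℤ)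
        exact hz i j hij
  rw [ExtFibPts, himg, Set.ncard_image_of_injective _ hinj, Set.ncard_coe_finset]

lemma Nmat_cond_iff (a : ℕ) (j : Fin (2*a+1)) :
    (|((0 : Fin (2*a+1)) : ℤ) - (a : ℤ)| + |(j : ℤ) - (a : ℤ)| ≤ (a : ℤ)) ↔ j = av a := by
  have h0 : (((0 : Fin (2*a+1))) : ℤ) = 0 := by simp
  rw [h0]
  have h1 : |(0:ℤ) - (a:ℤ)| = (a:ℤ) := by
    rw [zero_sub, abs_neg, abs_of_nonneg (by positivity)]
  rw [h1]
  constructor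
  · intro h
    have h2 : |(j:ℤ) - (a:ℤ)| = 0 := le_antisymm (by omega) (abs_nonneg _)
    rw [abs_eq_zero, sub_eq_zero] at h2
    have h3 : (j : ℕ) = a := by exact_mod_cast h2
    exact Fin.ext (by simpa [av] using h3)
  · rintro rfl
    rw [av_cast, sub_self, abs_zero, add_zero]

lemma Nmat_zero_right (a : ℕ) (j : Fin (2*a+1)) :
    Nmat a j 0 = if j = av a then 1 else 0 := by
  show (if |(j : ℤ) - (a : ℤ)| + |((0 : Fin (2*a+1)) : ℤ) - (a : ℤ)| ≤ (a : ℤ)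
      then (1:ℤ) else 0) = _
  refine if_congr ?_ rfl rfl
  rw [add_comm]
  exact Nmat_cond_iff a j

lemma Nmat_zero_left (a : ℕ) (j : Fin (2*a+1)) :
    Nmat a 0 j = if j = av a then 1 else 0 := by
  show (if |((0 : Fin (2*a+1)) : ℤ) - (a : ℤ)| + |(j : ℤ) - (a : ℤ)| ≤ (a : ℤ)
      then (1:ℤ) else 0) = _
  exact if_congr (Nmat_cond_iff a j) rfl rfl

theorem stmt2 (a d : ℕ) (ha : 1 ≤ a) (hd : 2 ≤ d) :
    (Nmat a ^ (d+1)) 0 0 = (ExtFibPts (d-2) a : ℤ) := by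
  set m := d - 2 with hm
  have hd3 : d + 1 = (m + 1) + 1 + 1 := by omega
  rw [hd3]
  have hsplit : Nmat a ^ ((m+1) + 1 + 1) = Nmat a * (Nmat a ^ (m+1)) * Nmat a := by
    rw [pow_succ, pow_succ']
  rw [hsplit, Matrix.mul_apply]
  simp_rw [Nmat_zero_right a, mul_ite, mul_one, mul_zero]
  rw [Finset.sum_ite_eq' Finset.univ (av a), if_pos (Finset.mem_univ _)]
  rw [Matrix.mul_apply]
  simp_rw [Nmat_zero_left a, ite_mul, one_mul, zero_mul]
  rw [Finset.sum_ite_eq' Finset.univ (av a), if_pos (Finset.mem_univ _)]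
  rw [pow_av a m (av a), Gcard_av, extFibPts_eq]
end

section
/- Let d ≥ 2 be an integer. There exist polynomials f, g ∈ ℚ[x], both of degree exactly d, such that for every prime p > 2, writing a = (p−1)/2, one has g(p) ≠ 0 and 1 + (2^d · F(d, a−1)) / ((2a+1)^d − E(d−2, a)) = f(p)/g(p) in ℚ. -/
open Polynomial Finset

noncomputable section HKAux

abbrev MvP := MvPolynomial (Fin 2) ℚ

def qpt (k c : ℚ) : Fin 2 → ℚ := ![k, c]

lemma finsupp_prod_fin2 {M : Type*} [CommMonoid M] (m : Fin 2 →₀ ℕ) (g : Fin 2 → M) :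
    (m.prod fun i e => g i ^ e) = g 0 ^ m 0 * g 1 ^ m 1 := by
  rw [Finsupp.prod_fintype _ _ (fun i => pow_zero (g i)), Fin.prod_univ_two]

lemma finsupp_sum_fin2 (m : Fin 2 →₀ ℕ) : (m.sum fun _ e => e) = m 0 + m 1 := by
  rw [Finsupp.sum_fintype _ _ (fun i => rfl), Fin.sum_univ_two]

lemma mem_support_deg_le {P : MvP} {m : Fin 2 →₀ ℕ} (hm : m ∈ P.support) :
    m 0 + m 1 ≤ P.totalDegree := by
  rw [← finsupp_sum_fin2]
  exact MvPolynomial.le_totalDegree hm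

lemma aeval_eq_sum_support (v : Fin 2 → ℚ) (P : MvP) :
    MvPolynomial.aeval v P = ∑ m ∈ P.support, P.coeff m * v 0 ^ m 0 * v 1 ^ m 1 := by
  conv_lhs => rw [← P.support_sum_monomial_coeff]
  rw [map_sum]
  refine Finset.sum_congr rfl fun m _ => ?_
  rw [MvPolynomial.aeval_monomial, finsupp_prod_fin2]
  simp [mul_assoc]

lemma td_polyAeval (w : MvP) (hw : w.totalDegree ≤ 1) (q : Polynomial ℚ) :
    (Polynomial.aeval w q).totalDegree ≤ q.natDegree := by
  rw [Polynomial.aeval_def, Polynomial.eval₂_eq_sum, Polynomial.sum]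
  refine MvPolynomial.totalDegree_finsetSum_le fun i hi => ?_
  calc (algebraMap ℚ MvP (q.coeff i) * w ^ i).totalDegree
      ≤ (algebraMap ℚ MvP (q.coeff i)).totalDegree + (w ^ i).totalDegree :=
        MvPolynomial.totalDegree_mul _ _
    _ ≤ 0 + i * w.totalDegree := by
        gcongr
        · exact le_of_eq (MvPolynomial.totalDegree_C _)
        · exact MvPolynomial.totalDegree_pow _ _
    _ ≤ i * 1 := by simpa using Nat.mul_le_mul_left i hw
    _ ≤ q.natDegree := by simpa using Polynomial.le_natDegree_of_mem_supp i hi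

lemma aeval_polyAeval (v : Fin 2 → ℚ) (w : MvP) (q : Polynomial ℚ) :
    MvPolynomial.aeval v (Polynomial.aeval w q) = q.eval (MvPolynomial.aeval v w) := by
  rw [← Polynomial.aeval_algHom_apply (MvPolynomial.aeval v) w q]
  simp [Polynomial.aeval_def, Polynomial.eval₂_eq_eval_map]

def toOneVar (P : MvP) : Polynomial ℚ :=
  MvPolynomial.aeval (fun _ : Fin 2 => (Polynomial.X : Polynomial ℚ)) P

lemma natDegree_toOneVar (P : MvP) : (toOneVar P).natDegree ≤ P.totalDegree := by
  rw [toOneVar]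
  conv_lhs => rw [← P.support_sum_monomial_coeff]
  rw [map_sum]
  refine Polynomial.natDegree_sum_le_of_forall_le _ _ fun m hm => ?_
  rw [MvPolynomial.aeval_monomial, finsupp_prod_fin2]
  calc (algebraMap ℚ ℚ[X] (P.coeff m) * ((X:ℚ[X]) ^ m 0 * (X:ℚ[X]) ^ m 1)).natDegree
      ≤ ((X:ℚ[X]) ^ m 0 * (X:ℚ[X]) ^ m 1).natDegree := by
        rw [Polynomial.algebraMap_eq]; exact Polynomial.natDegree_C_mul_le _ _
    _ ≤ m 0 + m 1 := by
        rw [← pow_add, Polynomial.natDegree_X_pow]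
    _ ≤ P.totalDegree := mem_support_deg_le hm

lemma eval_toOneVar (P : MvP) (x : ℚ) :
    (toOneVar P).eval x = MvPolynomial.aeval (fun _ : Fin 2 => x) P := by
  have h := MvPolynomial.comp_aeval_apply (Polynomial.aeval x : ℚ[X] →ₐ[ℚ] ℚ)
    (f := fun _ : Fin 2 => (Polynomial.X : Polynomial ℚ)) P
  simpa [toOneVar, Polynomial.aeval_def, Polynomial.eval₂_eq_eval_map] using h

lemma td_aeval_vars (g : Fin 2 → MvP) (hg : ∀ i, (g i).totalDegree ≤ 1) (P : MvP) :
    (MvPolynomial.aeval g P).totalDegree ≤ P.totalDegree := by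
  conv_lhs => rw [← P.support_sum_monomial_coeff]
  rw [map_sum]
  refine MvPolynomial.totalDegree_finsetSum_le fun m hm => ?_
  rw [MvPolynomial.aeval_monomial, finsupp_prod_fin2]
  calc (algebraMap ℚ MvP (P.coeff m) * (g 0 ^ m 0 * g 1 ^ m 1)).totalDegree
      ≤ (algebraMap ℚ MvP (P.coeff m)).totalDegree + (g 0 ^ m 0 * g 1 ^ m 1).totalDegree :=
        MvPolynomial.totalDegree_mul _ _
    _ ≤ 0 + ((g 0 ^ m 0).totalDegree + (g 1 ^ m 1).totalDegree) := by
        gcongr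
        · exact le_of_eq (MvPolynomial.totalDegree_C _)
        · exact MvPolynomial.totalDegree_mul _ _
    _ ≤ m 0 * 1 + m 1 * 1 := by
        simp only [zero_add]
        gcongr
        · exact (MvPolynomial.totalDegree_pow _ _).trans (Nat.mul_le_mul_left _ (hg 0))
        · exact (MvPolynomial.totalDegree_pow _ _).trans (Nat.mul_le_mul_left _ (hg 1))
    _ ≤ P.totalDegree := by simpa using mem_support_deg_le hm

lemma sumPowPoly (j : ℕ) : ∃ q : Polynomial ℚ, q.natDegree ≤ j + 1 ∧
    ∀ n : ℕ, q.eval (n : ℚ) = ∑ u ∈ Finset.range n, (u : ℚ) ^ j := by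
  refine ⟨∑ i ∈ Finset.range (j + 1),
      Polynomial.C (_root_.bernoulli i * ((j+1).choose i) / (j+1)) * Polynomial.X ^ (j + 1 - i), ?_, ?_⟩
  · refine Polynomial.natDegree_sum_le_of_forall_le _ _ fun i _ => ?_
    exact (Polynomial.natDegree_C_mul_le _ _).trans
      (by rw [Polynomial.natDegree_X_pow]; omega)
  · intro n
    rw [sum_range_pow n j]
    rw [Polynomial.eval_finset_sum]
    refine Finset.sum_congr rfl fun i _ => ?_
    simp only [Polynomial.eval_mul, Polynomial.eval_C, Polynomial.eval_pow, Polynomial.eval_X]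
    ring

end HKAux

noncomputable section HKAux2

lemma aeval_qpt_X0 (k c : ℚ) : MvPolynomial.aeval (qpt k c) (MvPolynomial.X 0 : MvP) = k := by
  simp [qpt]

lemma aeval_qpt_X1 (k c : ℚ) : MvPolynomial.aeval (qpt k c) (MvPolynomial.X 1 : MvP) = c := by
  simp [qpt]

/-- Key summation lemma. -/
lemma sumIco (s : ℕ) (P : MvP) (e : ℕ) (hP : P.totalDegree ≤ e) :
    ∃ Q : MvP, Q.totalDegree ≤ e + 1 ∧ ∀ k c : ℕ, c ≤ k →
      MvPolynomial.aeval (qpt k c) Q =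
        ∑ u ∈ Finset.Ico (k - c) (k + s), MvPolynomial.aeval (qpt (k:ℚ) (u:ℚ)) P := by
  choose q hqd hqe using sumPowPoly
  set X0 : MvP := MvPolynomial.X 0
  set X1 : MvP := MvPolynomial.X 1
  have hX0 : X0.totalDegree ≤ 1 := le_of_eq (MvPolynomial.totalDegree_X _)
  have hX1 : X1.totalDegree ≤ 1 := le_of_eq (MvPolynomial.totalDegree_X _)
  have htd1 : (X0 + MvPolynomial.C (s:ℚ)).totalDegree ≤ 1 :=
    (MvPolynomial.totalDegree_add _ _).trans
      (max_le hX0 (le_of_eq_of_le (MvPolynomial.totalDegree_C _) (Nat.zero_le 1)))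
  have htd2 : (X0 - X1).totalDegree ≤ 1 := by
    rw [sub_eq_add_neg]
    exact (MvPolynomial.totalDegree_add _ _).trans
      (max_le hX0 (le_of_eq_of_le (MvPolynomial.totalDegree_neg _) hX1))
  refine ⟨∑ m ∈ P.support, MvPolynomial.C (P.coeff m) * X0 ^ m 0 *
      (Polynomial.aeval (X0 + MvPolynomial.C (s:ℚ)) (q (m 1)) -
        Polynomial.aeval (X0 - X1) (q (m 1))), ?_, ?_⟩
  · refine MvPolynomial.totalDegree_finsetSum_le fun m hm => ?_
    have h1 : (Polynomial.aeval (X0 + MvPolynomial.C (s:ℚ)) (q (m 1)) -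
        Polynomial.aeval (X0 - X1) (q (m 1))).totalDegree ≤ m 1 + 1 := by
      rw [sub_eq_add_neg]
      refine (MvPolynomial.totalDegree_add _ _).trans (max_le ?_ ?_)
      · exact (td_polyAeval _ htd1 _).trans (hqd _)
      · exact le_of_eq_of_le (MvPolynomial.totalDegree_neg _)
          ((td_polyAeval _ htd2 _).trans (hqd _))
    calc (MvPolynomial.C (P.coeff m) * X0 ^ m 0 * _).totalDegree
        ≤ (MvPolynomial.C (P.coeff m) * X0 ^ m 0).totalDegree + (m 1 + 1) := by
          exact (MvPolynomial.totalDegree_mul _ _).trans (by gcongr)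
      _ ≤ (0 + m 0 * 1) + (m 1 + 1) := by
          gcongr
          refine (MvPolynomial.totalDegree_mul _ _).trans ?_
          gcongr
          · exact le_of_eq (MvPolynomial.totalDegree_C _)
          · exact (MvPolynomial.totalDegree_pow _ _).trans (Nat.mul_le_mul_left _ hX0)
      _ ≤ e + 1 := by
          have := mem_support_deg_le hm
          omega
  · intro k c hck
    rw [map_sum]
    have hptX0 : ∀ u : ℕ, MvPolynomial.aeval (qpt (k:ℚ) (u:ℚ)) X0 = (k:ℚ) := fun u => by
      simp [qpt, X0]
    -- rewrite each summand
    have hterm : ∀ m ∈ P.support,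
        MvPolynomial.aeval (qpt (k:ℚ) (c:ℚ))
          (MvPolynomial.C (P.coeff m) * X0 ^ m 0 *
            (Polynomial.aeval (X0 + MvPolynomial.C (s:ℚ)) (q (m 1)) -
              Polynomial.aeval (X0 - X1) (q (m 1)))) =
        P.coeff m * (k:ℚ) ^ m 0 *
          ∑ u ∈ Finset.Ico (k - c) (k + s), (u:ℚ) ^ m 1 := by
      intro m _
      have e1 : MvPolynomial.aeval (qpt (k:ℚ) (c:ℚ)) (X0 + MvPolynomial.C (s:ℚ)) = ((k + s : ℕ) : ℚ) := by
        push_cast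
        simp [qpt, X0]
      have e2 : MvPolynomial.aeval (qpt (k:ℚ) (c:ℚ)) (X0 - X1) = ((k - c : ℕ) : ℚ) := by
        rw [Nat.cast_sub hck]
        simp [qpt, X0, X1]
      rw [map_mul, map_mul, map_sub, aeval_polyAeval, aeval_polyAeval, e1, e2, hqe, hqe]
      rw [Finset.sum_Ico_eq_sub _ (by omega : k - c ≤ k + s)]
      simp [qpt, X0]
    rw [Finset.sum_congr rfl hterm]
    have hrhs : ∀ u ∈ Finset.Ico (k - c) (k + s),
        MvPolynomial.aeval (qpt (k:ℚ) (u:ℚ)) P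
          = ∑ m ∈ P.support, P.coeff m * (k:ℚ) ^ m 0 * (u:ℚ) ^ m 1 := by
      intro u _
      rw [aeval_eq_sum_support]
      refine Finset.sum_congr rfl fun m _ => ?_
      simp [qpt]
    rw [Finset.sum_congr rfl hrhs, Finset.sum_comm]
    refine Finset.sum_congr rfl fun m _ => ?_
    rw [Finset.mul_sum]

end HKAux2

noncomputable section HKAux3

/-- refined Fibonacci count: sequences of length `d`, entries in `[0,k]`, consecutive sums
`≤ k`, first entry `≤ c`. -/
def fibCnt (k : ℕ) : ℕ → ℕ → ℕ
  | 0, _ => 1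
  | d + 1, c => ∑ t ∈ Finset.range (c + 1), fibCnt k d (k - t)

def extCnt (k : ℕ) : ℕ → ℕ → ℕ
  | 0, _ => 1
  | e + 1, c => ∑ t ∈ Finset.Icc (-(c:ℤ)) (c:ℤ), extCnt k e (k - t.natAbs)

lemma reindex_fib (f : ℕ → ℚ) (k c : ℕ) (hck : c ≤ k) :
    ∑ t ∈ Finset.range (c + 1), f (k - t) = ∑ u ∈ Finset.Ico (k - c) (k + 1), f u := by
  refine Finset.sum_nbij' (fun t => k - t) (fun u => k - u) ?_ ?_ ?_ ?_ ?_
  · intro t ht; simp only [Finset.mem_range] at ht; simp only [Finset.mem_Ico]; omega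
  · intro u hu; simp only [Finset.mem_Ico] at hu; simp only [Finset.mem_range]; omega
  · intro t ht; simp only [Finset.mem_range] at ht; show k - (k - t) = t; omega
  · intro u hu; simp only [Finset.mem_Ico] at hu; show k - (k - u) = u; omega
  · intro t _; rfl

lemma reindex_ext (f : ℕ → ℚ) (k c : ℕ) (hck : c ≤ k) :
    ∑ t ∈ Finset.range c, f (k - (t + 1)) = ∑ u ∈ Finset.Ico (k - c) (k + 0), f u := by
  refine Finset.sum_nbij' (fun t => k - (t + 1)) (fun u => k - (u + 1)) ?_ ?_ ?_ ?_ ?_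
  · intro t ht; simp only [Finset.mem_range] at ht; simp only [Finset.mem_Ico]; omega
  · intro u hu; simp only [Finset.mem_Ico] at hu; simp only [Finset.mem_range]; omega
  · intro t ht; simp only [Finset.mem_range] at ht; show k - (k - (t+1) + 1) = t; omega
  · intro u hu; simp only [Finset.mem_Ico] at hu; show k - (k - (u+1) + 1) = u; omega
  · intro t _; rfl

lemma icc_natAbs_sum (g : ℕ → ℚ) (c : ℕ) :
    ∑ t ∈ Finset.Icc (-(c:ℤ)) (c:ℤ), g t.natAbs
      = g 0 + 2 * ∑ t ∈ Finset.range c, g (t + 1) := by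
  induction c with
  | zero => simp
  | succ c ih =>
      have h1 : (Finset.Icc (-(c+1:ℕ):ℤ) ((c+1:ℕ):ℤ))
          = insert (-(c+1:ℕ):ℤ) (insert ((c+1:ℕ):ℤ) (Finset.Icc (-(c:ℕ):ℤ) (c:ℤ))) := by
        ext t
        simp only [Finset.mem_Icc, Finset.mem_insert]
        push_cast
        omega
      rw [h1, Finset.sum_insert, Finset.sum_insert, ih, Finset.sum_range_succ]
      · have h2 : ((-(c+1:ℕ):ℤ)).natAbs = c + 1 := by omega
        have h3 : (((c+1:ℕ):ℤ)).natAbs = c + 1 := by omega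
        rw [h2, h3]
        ring
      · simp only [Finset.mem_Icc]; push_cast; omega
      · simp only [Finset.mem_insert, Finset.mem_Icc]; push_cast; omega

/-- Polynomiality of `fibCnt`. -/
lemma fibRep (d : ℕ) : ∃ P : MvP, P.totalDegree ≤ d ∧ ∀ k c : ℕ, c ≤ k →
    (fibCnt k d c : ℚ) = MvPolynomial.aeval (qpt k c) P := by
  induction d with
  | zero =>
      exact ⟨1, by simp, fun k c _ => by simp [fibCnt]⟩
  | succ d ih =>
      obtain ⟨P, hPd, hPe⟩ := ih
      obtain ⟨Q, hQd, hQe⟩ := sumIco 1 P d hPd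
      refine ⟨Q, hQd, fun k c hck => ?_⟩
      rw [hQe k c hck]
      have : (fibCnt k (d+1) c : ℚ) = ∑ t ∈ Finset.range (c+1), (fibCnt k d (k - t) : ℚ) := by
        rw [fibCnt]; push_cast; ring
      rw [this]
      have := reindex_fib (fun u => (fibCnt k d u : ℚ)) k c hck
      rw [this]
      refine Finset.sum_congr rfl fun u hu => ?_
      simp only [Finset.mem_Ico] at hu
      exact hPe k u (by omega)

/-- Polynomiality of `extCnt`. -/
lemma extRep (e : ℕ) : ∃ P : MvP, P.totalDegree ≤ e ∧ ∀ k c : ℕ, c ≤ k →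
    (extCnt k e c : ℚ) = MvPolynomial.aeval (qpt k c) P := by
  induction e with
  | zero =>
      exact ⟨1, by simp, fun k c _ => by simp [extCnt]⟩
  | succ e ih =>
      obtain ⟨P, hPd, hPe⟩ := ih
      obtain ⟨Q, hQd, hQe⟩ := sumIco 0 P e hPd
      set P0 : MvP := MvPolynomial.aeval (fun _ : Fin 2 => (MvPolynomial.X 0 : MvP)) P with hP0
      have hP0d : P0.totalDegree ≤ e :=
        (td_aeval_vars _ (fun i => le_of_eq (MvPolynomial.totalDegree_X _)) P).trans hPd
      have hP0e : ∀ k c : ℕ, MvPolynomial.aeval (qpt (k:ℚ) (c:ℚ)) P0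
          = MvPolynomial.aeval (fun _ : Fin 2 => (k:ℚ)) P := by
        intro k c
        rw [hP0, MvPolynomial.comp_aeval_apply]
        have hfun : (fun i : Fin 2 => MvPolynomial.aeval (qpt (k:ℚ) (c:ℚ))
            ((MvPolynomial.X 0 : MvP))) = fun _ : Fin 2 => (k:ℚ) := by
          funext i; simp [qpt]
        rw [hfun]
      refine ⟨P0 + 2 * Q, ?_, fun k c hck => ?_⟩
      · refine (MvPolynomial.totalDegree_add _ _).trans (max_le (hP0d.trans (by omega)) ?_)
        refine (MvPolynomial.totalDegree_mul _ _).trans ?_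
        have : (2 : MvP) = MvPolynomial.C 2 := (map_ofNat (MvPolynomial.C : ℚ →+* MvP) 2).symm
        rw [this, MvPolynomial.totalDegree_C]
        omega
      · rw [map_add, map_mul, hP0e k c, hQe k c hck]
        have hc : (extCnt k (e+1) c : ℚ)
            = ∑ t ∈ Finset.Icc (-(c:ℤ)) (c:ℤ), (extCnt k e (k - t.natAbs) : ℚ) := by
          rw [extCnt]; push_cast; ring
        rw [hc, icc_natAbs_sum (fun n => (extCnt k e (k - n) : ℚ)) c]
        have h0 : (extCnt k e (k - 0) : ℚ) = MvPolynomial.aeval (fun _ : Fin 2 => (k:ℚ)) P := by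
          have h := hPe k k le_rfl
          have hfun : qpt (k:ℚ) (k:ℚ) = fun _ : Fin 2 => (k:ℚ) := by
            funext i; fin_cases i <;> simp [qpt]
          rw [Nat.sub_zero, h, hfun]
        have h2 : ∑ t ∈ Finset.range c, (extCnt k e (k - (t+1)) : ℚ)
            = ∑ u ∈ Finset.Ico (k - c) (k + 0), MvPolynomial.aeval (qpt (k:ℚ) (u:ℚ)) P := by
          rw [reindex_ext (fun u => (extCnt k e u : ℚ)) k c hck]
          refine Finset.sum_congr rfl fun u hu => ?_
          simp only [Finset.mem_Ico] at hu
          exact hPe k u (by omega)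
        rw [h0, h2]
        have : MvPolynomial.aeval (qpt (k:ℚ) (c:ℚ)) (2 : MvP) = 2 := by simp
        rw [this]

end HKAux3

noncomputable section HKAux4
open Classical in
def fibFinset (d k c : ℕ) : Finset (Fin d → ℤ) :=
  (Fintype.piFinset fun _ : Fin d => Finset.Icc (0:ℤ) (k:ℤ)).filter fun x =>
    (∀ i j : Fin d, (j : ℕ) = (i : ℕ) + 1 → x i + x j ≤ (k:ℤ)) ∧
    (∀ i : Fin d, (i : ℕ) = 0 → x i ≤ (c:ℤ))

open Classical in
lemma mem_fibFinset {d k c : ℕ} {x : Fin d → ℤ} :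
    x ∈ fibFinset d k c ↔ (∀ i, 0 ≤ x i ∧ x i ≤ (k:ℤ)) ∧
      (∀ i j : Fin d, (j : ℕ) = (i : ℕ) + 1 → x i + x j ≤ (k:ℤ)) ∧
      (∀ i : Fin d, (i : ℕ) = 0 → x i ≤ (c:ℤ)) := by
  simp [fibFinset, Fintype.mem_piFinset, Finset.mem_Icc, and_assoc]

open Classical in
def extFinset (d k c : ℕ) : Finset (Fin d → ℤ) :=
  (Fintype.piFinset fun _ : Fin d => Finset.Icc (-(k:ℤ)) (k:ℤ)).filter fun x =>
    (∀ i j : Fin d, (j : ℕ) = (i : ℕ) + 1 → |x i| + |x j| ≤ (k:ℤ)) ∧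
    (∀ i : Fin d, (i : ℕ) = 0 → |x i| ≤ (c:ℤ))

open Classical in
lemma mem_extFinset {d k c : ℕ} {x : Fin d → ℤ} :
    x ∈ extFinset d k c ↔ (∀ i, |x i| ≤ (k:ℤ)) ∧
      (∀ i j : Fin d, (j : ℕ) = (i : ℕ) + 1 → |x i| + |x j| ≤ (k:ℤ)) ∧
      (∀ i : Fin d, (i : ℕ) = 0 → |x i| ≤ (c:ℤ)) := by
  simp [extFinset, Fintype.mem_piFinset, Finset.mem_Icc, and_assoc, abs_le]

lemma fibFinset_zero (k c : ℕ) : fibFinset 0 k c = {fun i => i.elim0} := by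
  ext x
  simp only [mem_fibFinset, Finset.mem_singleton]
  constructor
  · intro _; funext i; exact i.elim0
  · intro _; exact ⟨fun i => i.elim0, fun i => i.elim0, fun i => i.elim0⟩

lemma extFinset_zero (k c : ℕ) : extFinset 0 k c = {fun i => i.elim0} := by
  ext x
  simp only [mem_extFinset, Finset.mem_singleton]
  constructor
  · intro _; funext i; exact i.elim0
  · intro _; exact ⟨fun i => i.elim0, fun i => i.elim0, fun i => i.elim0⟩

lemma fibFinset_card (d : ℕ) : ∀ k c : ℕ, c ≤ k → (fibFinset d k c).card = fibCnt k d c := by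
  induction d with
  | zero => intro k c _; rw [fibFinset_zero]; rfl
  | succ d ih =>
    intro k c hck
    classical
    have hmap : ∀ x ∈ fibFinset (d+1) k c, x 0 ∈ Finset.Icc (0:ℤ) (c:ℤ) := by
      intro x hx
      rw [mem_fibFinset] at hx
      exact Finset.mem_Icc.mpr ⟨(hx.1 0).1, hx.2.2 0 rfl⟩
    rw [Finset.card_eq_sum_card_fiberwise hmap]
    have hfib : ∀ t : ℤ, t ∈ Finset.Icc (0:ℤ) (c:ℤ) →
        ((fibFinset (d+1) k c).filter fun x => x 0 = t).card = fibCnt k d (k - t.toNat) := by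
      intro t ht
      rw [Finset.mem_Icc] at ht
      have htk : t.toNat ≤ k := by omega
      have hcast : ((k - t.toNat : ℕ) : ℤ) = (k:ℤ) - t := by omega
      rw [← ih k (k - t.toNat) (by omega)]
      refine Finset.card_bij' (fun x _ => Fin.tail x) (fun y _ => Fin.cons t y) ?_ ?_ ?_ ?_
      · intro x hx
        simp only [Finset.mem_filter] at hx
        obtain ⟨hx, hx0⟩ := hx
        rw [mem_fibFinset] at hx
        obtain ⟨h1, h2, _⟩ := hx
        rw [mem_fibFinset]
        refine ⟨fun i => h1 i.succ, ?_, ?_⟩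
        · intro i j hij
          have hij' : (j.succ : ℕ) = (i.succ : ℕ) + 1 := by
            simp only [Fin.val_succ]; omega
          exact h2 i.succ j.succ hij'
        · intro i hi
          have hi1 : (i.succ : ℕ) = (0 : Fin (d+1)).val + 1 := by
            simp only [Fin.val_succ, Fin.val_zero]; omega
          have := h2 0 i.succ hi1
          rw [hx0] at this
          show x i.succ ≤ _
          omega
      · intro y hy
        rw [mem_fibFinset] at hy
        obtain ⟨h1, h2, h3⟩ := hy
        simp only [Finset.mem_filter]
        refine ⟨?_, by simp⟩
        rw [mem_fibFinset]
        refine ⟨?_, ?_, ?_⟩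
        · intro i
          rcases Fin.eq_zero_or_eq_succ i with rfl | ⟨i', rfl⟩
          · simp only [Fin.cons_zero]; omega
          · simpa using h1 i'
        · intro i j hij
          have hj0 : j ≠ 0 := by
            intro h; rw [h] at hij; simp at hij
          obtain ⟨j', rfl⟩ := Fin.eq_succ_of_ne_zero hj0
          rcases Fin.eq_zero_or_eq_succ i with rfl | ⟨i', rfl⟩
          · have hj' : (j' : ℕ) = 0 := by
              simp only [Fin.val_succ, Fin.val_zero] at hij; omega
            have := h3 j' hj'
            simp only [Fin.cons_zero, Fin.cons_succ]
            omega
          · have hj' : (j' : ℕ) = (i' : ℕ) + 1 := by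
              simp only [Fin.val_succ] at hij; omega
            simpa using h2 i' j' hj'
        · intro i hi
          have hi0 : i = 0 := by ext; exact hi
          rw [hi0]
          simp only [Fin.cons_zero]
          omega
      · intro x hx
        simp only [Finset.mem_filter] at hx
        have h := Fin.cons_self_tail (α := fun _ : Fin (d+1) => ℤ) x
        rw [hx.2] at h
        exact h
      · intro y _
        simp [Fin.tail_cons]
    rw [Finset.sum_congr rfl hfib]
    rw [show fibCnt k (d+1) c = ∑ t ∈ Finset.range (c+1), fibCnt k d (k - t) from rfl]
    refine Finset.sum_nbij' (fun t : ℤ => t.toNat) (fun t : ℕ => (t:ℤ)) ?_ ?_ ?_ ?_ ?_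
    · intro t ht; simp only [Finset.mem_Icc] at ht; simp only [Finset.mem_range]; omega
    · intro t ht; simp only [Finset.mem_range] at ht; simp only [Finset.mem_Icc]; omega
    · intro t ht; simp only [Finset.mem_Icc] at ht; show ((t.toNat : ℤ)) = t; omega
    · intro t ht; show ((t:ℤ)).toNat = t; omega
    · intro t ht; rfl

end HKAux4

noncomputable section HKAux5

lemma extFinset_card (d : ℕ) : ∀ k c : ℕ, c ≤ k → (extFinset d k c).card = extCnt k d c := by
  induction d with
  | zero => intro k c _; rw [extFinset_zero]; rfl
  | succ d ih =>
    intro k c hck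
    classical
    have hmap : ∀ x ∈ extFinset (d+1) k c, x 0 ∈ Finset.Icc (-(c:ℤ)) (c:ℤ) := by
      intro x hx
      rw [mem_extFinset] at hx
      have := hx.2.2 0 rfl
      rw [Finset.mem_Icc]
      simp only [Int.abs_eq_natAbs] at this
      omega
    rw [Finset.card_eq_sum_card_fiberwise hmap]
    rw [show extCnt k (d+1) c = ∑ t ∈ Finset.Icc (-(c:ℤ)) (c:ℤ), extCnt k d (k - t.natAbs) from rfl]
    refine Finset.sum_congr rfl fun t ht => ?_
    rw [Finset.mem_Icc] at ht
    have htk : t.natAbs ≤ k := by omega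
    have hcast : ((k - t.natAbs : ℕ) : ℤ) = (k:ℤ) - t.natAbs := by omega
    rw [← ih k (k - t.natAbs) (by omega)]
    refine Finset.card_bij' (fun x _ => Fin.tail x) (fun y _ => Fin.cons t y) ?_ ?_ ?_ ?_
    · intro x hx
      simp only [Finset.mem_filter] at hx
      obtain ⟨hx, hx0⟩ := hx
      rw [mem_extFinset] at hx
      obtain ⟨h1, h2, _⟩ := hx
      rw [mem_extFinset]
      refine ⟨fun i => h1 i.succ, ?_, ?_⟩
      · intro i j hij
        have hij' : (j.succ : ℕ) = (i.succ : ℕ) + 1 := by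
          simp only [Fin.val_succ]; omega
        exact h2 i.succ j.succ hij'
      · intro i hi
        have hi1 : (i.succ : ℕ) = (0 : Fin (d+1)).val + 1 := by
          simp only [Fin.val_succ, Fin.val_zero]; omega
        have h := h2 0 i.succ hi1
        rw [hx0] at h
        show |x i.succ| ≤ _
        simp only [Int.abs_eq_natAbs] at h ⊢
        omega
    · intro y hy
      rw [mem_extFinset] at hy
      obtain ⟨h1, h2, h3⟩ := hy
      simp only [Finset.mem_filter]
      refine ⟨?_, by simp⟩
      rw [mem_extFinset]
      refine ⟨?_, ?_, ?_⟩
      · intro i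
        rcases Fin.eq_zero_or_eq_succ i with rfl | ⟨i', rfl⟩
        · simp only [Fin.cons_zero]
          simp only [Int.abs_eq_natAbs]; omega
        · simpa using h1 i'
      · intro i j hij
        have hj0 : j ≠ 0 := by
          intro h; rw [h] at hij; simp at hij
        obtain ⟨j', rfl⟩ := Fin.eq_succ_of_ne_zero hj0
        rcases Fin.eq_zero_or_eq_succ i with rfl | ⟨i', rfl⟩
        · have hj' : (j' : ℕ) = 0 := by
            simp only [Fin.val_succ, Fin.val_zero] at hij; omega
          have h := h3 j' hj'
          simp only [Fin.cons_zero, Fin.cons_succ]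
          simp only [Int.abs_eq_natAbs] at h ⊢
          omega
        · have hj' : (j' : ℕ) = (i' : ℕ) + 1 := by
            simp only [Fin.val_succ] at hij; omega
          simpa using h2 i' j' hj'
      · intro i hi
        have hi0 : i = 0 := by ext; exact hi
        rw [hi0]
        simp only [Fin.cons_zero]
        simp only [Int.abs_eq_natAbs]; omega
    · intro x hx
      simp only [Finset.mem_filter] at hx
      have h := Fin.cons_self_tail (α := fun _ : Fin (d+1) => ℤ) x
      rw [hx.2] at h
      exact h
    · intro y _
      simp [Fin.tail_cons]

lemma FibPts_eq_fibCnt (d k : ℕ) : FibPts d k = fibCnt k d k := by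
  classical
  have hset : {x : Fin d → ℤ | (∀ i, 0 ≤ x i ∧ x i ≤ (k : ℤ)) ∧
      ∀ i j : Fin d, (j : ℕ) = (i : ℕ) + 1 → x i + x j ≤ (k : ℤ)}
      = ↑(fibFinset d k k) := by
    ext x
    simp only [Set.mem_setOf_eq, Finset.coe_filter, Finset.mem_coe, mem_fibFinset]
    constructor
    · rintro ⟨h1, h2⟩
      exact ⟨h1, h2, fun i _ => (h1 i).2⟩
    · rintro ⟨h1, h2, _⟩
      exact ⟨h1, h2⟩
  rw [FibPts, hset, Set.ncard_coe_finset, fibFinset_card d k k le_rfl]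

lemma ExtFibPts_eq_extCnt (d k : ℕ) : ExtFibPts d k = extCnt k d k := by
  classical
  have hset : {x : Fin d → ℤ | (∀ i, |x i| ≤ (k : ℤ)) ∧
      ∀ i j : Fin d, (j : ℕ) = (i : ℕ) + 1 → |x i| + |x j| ≤ (k : ℤ)}
      = ↑(extFinset d k k) := by
    ext x
    simp only [Set.mem_setOf_eq, Finset.coe_filter, Finset.mem_coe, mem_extFinset]
    constructor
    · rintro ⟨h1, h2⟩
      exact ⟨h1, h2, fun i _ => h1 i⟩
    · rintro ⟨h1, h2, _⟩
      exact ⟨h1, h2⟩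
  rw [ExtFibPts, hset, Set.ncard_coe_finset, extFinset_card d k k le_rfl]

lemma extCnt_le (d k : ℕ) : extCnt k d k ≤ (2 * k + 1) ^ d := by
  classical
  rw [← extFinset_card d k k le_rfl]
  calc (extFinset d k k).card
      ≤ (Fintype.piFinset fun _ : Fin d => Finset.Icc (-(k:ℤ)) (k:ℤ)).card :=
        Finset.card_filter_le _ _
    _ = (2 * k + 1) ^ d := by
        rw [Fintype.card_piFinset]
        have : (Finset.Icc (-(k:ℤ)) (k:ℤ)).card = 2 * k + 1 := by
          rw [Int.card_Icc]
          omega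
        simp [this]

end HKAux5

section HKAux6
open Polynomial

lemma leadingCoeff_nonneg_of_eval_nat (P : ℚ[X]) (h : ∀ n : ℕ, 0 ≤ P.eval (n:ℚ)) :
    0 ≤ P.leadingCoeff := by
  by_contra hlt
  push_neg at hlt
  rcases le_or_gt P.degree 0 with hd | hd
  · have h0 := h 0
    have hnd : P.natDegree = 0 := Polynomial.natDegree_eq_zero_iff_degree_le_zero.mpr hd
    rw [Polynomial.leadingCoeff, hnd] at hlt
    rw [Nat.cast_zero, ← Polynomial.coeff_zero_eq_eval_zero] at h0
    linarith
  · have htb := Polynomial.tendsto_atBot_of_leadingCoeff_nonpos P hd hlt.le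
    have h2 : Filter.Tendsto (fun n : ℕ => P.eval (n:ℚ)) Filter.atTop Filter.atBot :=
      htb.comp tendsto_natCast_atTop_atTop
    obtain ⟨n, hn⟩ := (h2.eventually (Filter.eventually_lt_atBot (0:ℚ))).exists
    exact absurd (h n) (not_le.mpr hn)

end HKAux6

theorem stmt5 (d : ℕ) (hd : 2 ≤ d) :
    ∃ f g : Polynomial ℚ, f.degree = (d : WithBot ℕ) ∧ g.degree = (d : WithBot ℕ) ∧
      ∀ p : ℕ, p.Prime → 2 < p → ∀ a : ℕ, a = (p-1)/2 →
        g.eval (p : ℚ) ≠ 0 ∧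
        1 + (2^d * (FibPts d (a-1) : ℚ)) / ((2*(a : ℚ)+1)^d - (ExtFibPts (d-2) a : ℚ))
          = f.eval (p : ℚ) / g.eval (p : ℚ) := by
  classical
  obtain ⟨PF, hPFd, hPFe⟩ := fibRep d
  obtain ⟨PE, hPEd, hPEe⟩ := extRep (d-2)
  set FF : Polynomial ℚ := toOneVar PF with hFF
  set EE : Polynomial ℚ := toOneVar PE with hEE
  have hFFdeg : FF.natDegree ≤ d := (natDegree_toOneVar PF).trans hPFd
  have hEEdeg : EE.natDegree ≤ d - 2 := (natDegree_toOneVar PE).trans hPEd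
  have hqq : ∀ n : ℕ, (fun _ : Fin 2 => (n:ℚ)) = qpt (n:ℚ) (n:ℚ) := by
    intro n; funext i; fin_cases i <;> simp [qpt]
  have hFFeval : ∀ n : ℕ, FF.eval (n:ℚ) = (FibPts d n : ℚ) := by
    intro n
    rw [hFF, eval_toOneVar, FibPts_eq_fibCnt, hqq n, ← hPFe n n le_rfl]
  have hEEeval : ∀ n : ℕ, EE.eval (n:ℚ) = (ExtFibPts (d-2) n : ℚ) := by
    intro n
    rw [hEE, eval_toOneVar, ExtFibPts_eq_extCnt, hqq n, ← hPEe n n le_rfl]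
  set L3 : Polynomial ℚ := Polynomial.C (1/2 : ℚ) * (Polynomial.X - Polynomial.C 3) with hL3
  set L1 : Polynomial ℚ := Polynomial.C (1/2 : ℚ) * (Polynomial.X - Polynomial.C 1) with hL1
  have hL3deg : L3.natDegree = 1 := by
    rw [hL3, Polynomial.natDegree_C_mul (by norm_num : (1/2:ℚ) ≠ 0), Polynomial.natDegree_X_sub_C]
  have hL1deg : L1.natDegree = 1 := by
    rw [hL1, Polynomial.natDegree_C_mul (by norm_num : (1/2:ℚ) ≠ 0), Polynomial.natDegree_X_sub_C]
  set Fp : Polynomial ℚ := FF.comp L3 with hFp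
  set Ep : Polynomial ℚ := EE.comp L1 with hEp
  have hFpdeg : Fp.natDegree ≤ d := by
    rw [hFp, Polynomial.natDegree_comp, hL3deg, mul_one]; exact hFFdeg
  have hEpdeg : Ep.natDegree ≤ d - 2 := by
    rw [hEp, Polynomial.natDegree_comp, hL1deg, mul_one]; exact hEEdeg
  set g : Polynomial ℚ := Polynomial.X ^ d - Ep with hg
  have hEpdeglt : Ep.degree < (Polynomial.X ^ d : Polynomial ℚ).degree := by
    rw [Polynomial.degree_X_pow]
    calc Ep.degree ≤ (Ep.natDegree : WithBot ℕ) := Polynomial.degree_le_natDegree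
      _ < (d : WithBot ℕ) := by
          exact_mod_cast Nat.lt_of_le_of_lt hEpdeg (by omega)
  have hgdeg : g.degree = (d : WithBot ℕ) := by
    rw [hg, Polynomial.degree_sub_eq_left_of_degree_lt hEpdeglt, Polynomial.degree_X_pow]
  have hgcoeff : g.coeff d = 1 := by
    rw [hg, Polynomial.coeff_sub, Polynomial.coeff_X_pow, if_pos rfl,
      Polynomial.coeff_eq_zero_of_natDegree_lt (by omega : Ep.natDegree < d), sub_zero]
  have hFpcoeff : 0 ≤ Fp.coeff d := by
    rcases lt_or_eq_of_le hFpdeg with hlt | heq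
    · rw [Polynomial.coeff_eq_zero_of_natDegree_lt hlt]
    · have hFFlc : 0 ≤ FF.leadingCoeff := by
        refine leadingCoeff_nonneg_of_eval_nat FF fun n => ?_
        rw [hFFeval n]
        positivity
      have hL3lc : L3.leadingCoeff = 1/2 := by
        rw [hL3, Polynomial.leadingCoeff_mul, Polynomial.leadingCoeff_C,
          (Polynomial.monic_X_sub_C (3:ℚ)).leadingCoeff, mul_one]
      have : Fp.coeff d = Fp.leadingCoeff := by
        rw [Polynomial.leadingCoeff, heq]
      rw [this, hFp, Polynomial.leadingCoeff_comp (by rw [hL3deg]; omega), hL3lc]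
      positivity
  set f : Polynomial ℚ := g + Polynomial.C ((2:ℚ)^d) * Fp with hf
  have hfcoeff : f.coeff d = 1 + 2^d * Fp.coeff d := by
    rw [hf, Polynomial.coeff_add, Polynomial.coeff_C_mul, hgcoeff]
  have hfcoeffpos : 0 < f.coeff d := by
    rw [hfcoeff]
    positivity
  have hfdegle : f.degree ≤ (d : WithBot ℕ) := by
    rw [hf]
    refine (Polynomial.degree_add_le _ _).trans (max_le ?_ ?_)
    · rw [hgdeg]
    · refine (Polynomial.degree_mul_le _ _).trans ?_
      have h1 : (Polynomial.C ((2:ℚ)^d)).degree ≤ 0 := Polynomial.degree_C_le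
      have h2 : Fp.degree ≤ (d : WithBot ℕ) :=
        Polynomial.degree_le_natDegree.trans (by exact_mod_cast hFpdeg)
      calc (Polynomial.C ((2:ℚ)^d)).degree + Fp.degree ≤ 0 + (d : WithBot ℕ) :=
            add_le_add h1 h2
        _ = (d : WithBot ℕ) := zero_add _
  have hfdeg : f.degree = (d : WithBot ℕ) := by
    exact Polynomial.degree_eq_of_le_of_coeff_ne_zero hfdegle hfcoeffpos.ne'
  refine ⟨f, g, hfdeg, hgdeg, ?_⟩
  intro p hp hp2 a ha
  have hodd : p % 2 = 1 := Nat.odd_iff.mp (hp.odd_of_ne_two (by omega))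
  have hpa : p = 2*a + 1 := by omega
  have ha1 : 1 ≤ a := by omega
  have hpc : (p:ℚ) = 2*(a:ℚ)+1 := by rw [hpa]; push_cast; ring
  have hEpval : Ep.eval (p:ℚ) = (ExtFibPts (d-2) a : ℚ) := by
    rw [hEp, Polynomial.eval_comp]
    have hL1v : L1.eval (p:ℚ) = (a:ℚ) := by
      rw [hL1]; simp only [Polynomial.eval_mul, Polynomial.eval_C, Polynomial.eval_sub,
        Polynomial.eval_X]
      rw [hpc]; ring
    rw [hL1v, hEEeval a]
  have hFpval : Fp.eval (p:ℚ) = (FibPts d (a-1) : ℚ) := by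
    rw [hFp, Polynomial.eval_comp]
    have hL3v : L3.eval (p:ℚ) = ((a - 1 : ℕ) : ℚ) := by
      rw [hL3]; simp only [Polynomial.eval_mul, Polynomial.eval_C, Polynomial.eval_sub,
        Polynomial.eval_X]
      rw [hpc, Nat.cast_sub ha1]
      push_cast; ring
    rw [hL3v, hFFeval (a-1)]
  have hgval : g.eval (p:ℚ) = (p:ℚ)^d - (ExtFibPts (d-2) a : ℚ) := by
    rw [hg, Polynomial.eval_sub, Polynomial.eval_pow, Polynomial.eval_X, hEpval]
  have hEbound : (ExtFibPts (d-2) a : ℚ) ≤ (p:ℚ)^(d-2) := by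
    rw [ExtFibPts_eq_extCnt]
    have h1 := extCnt_le (d-2) a
    have h2 : ((extCnt a (d-2) a : ℕ) : ℚ) ≤ (((2*a+1)^(d-2) : ℕ) : ℚ) := by
      exact_mod_cast h1
    calc ((extCnt a (d-2) a : ℕ) : ℚ) ≤ (((2*a+1)^(d-2) : ℕ) : ℚ) := h2
      _ = (p:ℚ)^(d-2) := by rw [hpc]; push_cast; ring
  have hp1 : (1:ℚ) < (p:ℚ) := by exact_mod_cast hp.one_lt
  have hlt : (p:ℚ)^(d-2) < (p:ℚ)^d :=
    pow_lt_pow_right₀ hp1 (by omega)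
  have hgpos : 0 < g.eval (p:ℚ) := by
    rw [hgval]; linarith
  refine ⟨hgpos.ne', ?_⟩
  have hfval : f.eval (p:ℚ) = g.eval (p:ℚ) + 2^d * (FibPts d (a-1) : ℚ) := by
    rw [hf, Polynomial.eval_add, Polynomial.eval_mul, Polynomial.eval_C, hFpval]
  have hdenom : (2*(a:ℚ)+1)^d - (ExtFibPts (d-2) a : ℚ) = g.eval (p:ℚ) := by
    rw [hgval, hpc]
  rw [hdenom, hfval]
  field_simp
end

section
/- Let d ≥ 2 be an integer. Then the real sequence a ↦ (2^d · F(d, a−1)) / ((2a+1)^d − E(d−2, a)) converges, as a → ∞, to Alt(d)/d!, where Alt(d) is the number of alternating permutations of {1,…,d} (the Euler zigzag number). -/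
/-- A permutation `σ` of `Fin d` (thought of as `{1, …, d}`) is alternating if
`σ(1) > σ(2) < σ(3) > σ(4) < ⋯`.  In 0-based indexing: for consecutive indices
`i, j = i+1`, if `i` is even then `σ i > σ j`, and if `i` is odd then `σ i < σ j`. -/
def IsAlternating {d : ℕ} (σ : Equiv.Perm (Fin d)) : Prop :=
  ∀ i j : Fin d, (j : ℕ) = (i : ℕ) + 1 →
    (((i : ℕ) % 2 = 0 → σ j < σ i) ∧ ((i : ℕ) % 2 = 1 → σ i < σ j))

/-- `Alt d` : the number of alternating permutations of `{1, …, d}` (Euler zigzag number). -/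
noncomputable def Alt (d : ℕ) : ℕ :=
  Nat.card {σ : Equiv.Perm (Fin d) // IsAlternating σ}

def ZigSet (d : ℕ) (k : ℤ) : Set (Fin d → ℤ) :=
  {y | (∀ i, 0 ≤ y i ∧ y i ≤ k) ∧
    ∀ i j : Fin d, (j : ℕ) = (i : ℕ) + 1 →
      (((i : ℕ) % 2 = 0 → y j ≤ y i) ∧ ((i : ℕ) % 2 = 1 → y i ≤ y j))}

def ZigInj (d : ℕ) (k : ℤ) : Set (Fin d → ℤ) :=
  {y | y ∈ ZigSet d k ∧ Function.Injective y}

lemma card_zigInj (d k : ℕ) :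
    Nat.card (ZigInj d (k : ℤ)) = (k+1).choose d * Alt d := by
  classical
  set I : Finset ℤ := Finset.Icc (0 : ℤ) (k : ℤ) with hIdef
  have hI : I.card = k + 1 := by
    rw [hIdef, Int.card_Icc]; omega
  set P := {s : Finset ℤ // s ∈ Finset.powersetCard d I} ×
    {σ : Equiv.Perm (Fin d) // IsAlternating σ} with hP
  have hcard : ∀ p : P, (p.1.1).card = d := fun p => (Finset.mem_powersetCard.mp p.1.2).2
  have hsub : ∀ p : P, (p.1.1) ⊆ I := fun p => (Finset.mem_powersetCard.mp p.1.2).1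
  set F : P → (Fin d → ℤ) :=
    fun p i => ((p.1.1.orderIsoOfFin (hcard p)) (p.2.1 i) : ℤ) with hF
  have hFmem : ∀ p : P, F p ∈ ZigInj d (k : ℤ) := by
    intro p
    refine ⟨⟨fun i => ?_, fun i j hij => ?_⟩, ?_⟩
    · exact Finset.mem_Icc.mp (hsub p ((p.1.1.orderIsoOfFin (hcard p)) (p.2.1 i)).2)
    · have h := p.2.2 i j hij
      constructor <;> intro hpar
      · exact le_of_lt (Subtype.coe_lt_coe.mpr
          ((p.1.1.orderIsoOfFin (hcard p)).lt_iff_lt.mpr (h.1 hpar)))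
      · exact le_of_lt (Subtype.coe_lt_coe.mpr
          ((p.1.1.orderIsoOfFin (hcard p)).lt_iff_lt.mpr (h.2 hpar)))
    · exact Subtype.val_injective.comp
        (((p.1.1.orderIsoOfFin (hcard p)).injective).comp (p.2.1.injective))
  have himage : ∀ p : P, Finset.image (F p) Finset.univ = p.1.1 := by
    intro p
    ext z
    simp only [Finset.mem_image, Finset.mem_univ, true_and]
    constructor
    · rintro ⟨i, rfl⟩
      exact ((p.1.1.orderIsoOfFin (hcard p)) (p.2.1 i)).2
    · intro hz
      refine ⟨p.2.1.symm ((p.1.1.orderIsoOfFin (hcard p)).symm ⟨z, hz⟩), ?_⟩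
      show ((p.1.1.orderIsoOfFin (hcard p)) (p.2.1 (p.2.1.symm _)) : ℤ) = z
      rw [Equiv.apply_symm_apply, OrderIso.apply_symm_apply]
  have hFinj : Function.Injective F := by
    rintro ⟨⟨s1, hs1⟩, ⟨σ1, hσ1⟩⟩ ⟨⟨s2, hs2⟩, ⟨σ2, hσ2⟩⟩ heq
    have hs : s1 = s2 := by
      have h1 := himage ⟨⟨s1, hs1⟩, ⟨σ1, hσ1⟩⟩
      have h2 := himage ⟨⟨s2, hs2⟩, ⟨σ2, hσ2⟩⟩
      simp only at h1 h2
      rw [← h1, ← h2, heq]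
    subst hs
    have hσ : σ1 = σ2 := by
      ext i
      have h := congrFun heq i
      simp only [hF] at h
      have h2 : (s1.orderIsoOfFin ((Finset.mem_powersetCard.mp hs1).2)) (σ1 i)
          = (s1.orderIsoOfFin ((Finset.mem_powersetCard.mp hs1).2)) (σ2 i) := Subtype.ext h
      have h3 := (s1.orderIsoOfFin ((Finset.mem_powersetCard.mp hs1).2)).injective h2
      exact congrArg Fin.val h3
    simp [hσ]
  have hFsurj : ∀ y ∈ ZigInj d (k : ℤ), ∃ p : P, F p = y := by
    rintro y ⟨⟨hb, hz⟩, hinj⟩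
    set s : Finset ℤ := Finset.image y Finset.univ with hsdef
    have hcards : s.card = d := by
      rw [hsdef, Finset.card_image_of_injective _ hinj, Finset.card_univ, Fintype.card_fin]
    have hssub : s ⊆ I := by
      intro z hz'
      rw [hsdef] at hz'
      obtain ⟨i, _, rfl⟩ := Finset.mem_image.mp hz'
      exact Finset.mem_Icc.mpr (hb i)
    have hsmem : s ∈ Finset.powersetCard d I := Finset.mem_powersetCard.mpr ⟨hssub, hcards⟩
    have hbij : Function.Bijective
        (fun i : Fin d => (⟨y i, Finset.mem_image_of_mem y (Finset.mem_univ i)⟩ : ↥s)) := by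
      rw [Fintype.bijective_iff_injective_and_card]
      constructor
      · intro i j h
        exact hinj (congrArg Subtype.val h)
      · rw [Fintype.card_coe, hcards, Fintype.card_fin]
    set e1 : Fin d ≃ ↥s := Equiv.ofBijective _ hbij with he1
    set iso := s.orderIsoOfFin hcards with hiso
    set σ : Equiv.Perm (Fin d) := e1.trans iso.symm.toEquiv with hσdef
    have hval : ∀ i, (iso (σ i) : ℤ) = y i := by
      intro i
      show ((iso (iso.symm (e1 i)) : ↥s) : ℤ) = y i
      rw [OrderIso.apply_symm_apply]
      rfl
    have hlt : ∀ i j, σ i < σ j ↔ y i < y j := by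
      intro i j
      constructor
      · intro h'
        have h2 := Subtype.coe_lt_coe.mpr (iso.lt_iff_lt.mpr h')
        rwa [hval i, hval j] at h2
      · intro h'
        have h2 : (iso (σ i) : ℤ) < (iso (σ j) : ℤ) := by rw [hval i, hval j]; exact h'
        exact iso.lt_iff_lt.mp (Subtype.coe_lt_coe.mp h2)
    have hne : ∀ i j : Fin d, (j : ℕ) = (i : ℕ) + 1 → y i ≠ y j := by
      intro i j hij h
      have : i = j := hinj h
      rw [this] at hij
      omega
    have hσalt : IsAlternating σ := by
      intro i j hij
      have h := hz i j hij
      constructor <;> intro hpar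
      · exact (hlt j i).mpr (lt_of_le_of_ne (h.1 hpar) (fun hc => hne i j hij hc.symm))
      · exact (hlt i j).mpr (lt_of_le_of_ne (h.2 hpar) (hne i j hij))
    refine ⟨⟨⟨s, hsmem⟩, ⟨σ, hσalt⟩⟩, ?_⟩
    funext i
    exact hval i
  have hequiv : Nat.card (ZigInj d (k : ℤ)) = Nat.card P := by
    apply Nat.card_congr
    refine Equiv.symm (Equiv.ofBijective (fun p => ⟨F p, hFmem p⟩) ⟨?_, ?_⟩)
    · intro p q h
      exact hFinj (congrArg Subtype.val h)
    · rintro ⟨y, hy⟩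
      obtain ⟨p, hp⟩ := hFsurj y hy
      exact ⟨p, Subtype.ext hp⟩
  rw [hequiv, hP, Nat.card_prod, Nat.card_eq_finsetCard, Finset.card_powersetCard, hI, Alt]

lemma fib_eq_zig (d k : ℕ) : FibPts d k = (ZigSet d (k : ℤ)).ncard := by
  classical
  set S : Set (Fin d → ℤ) := {x : Fin d → ℤ | (∀ i, 0 ≤ x i ∧ x i ≤ (k : ℤ)) ∧
    ∀ i j : Fin d, (j : ℕ) = (i : ℕ) + 1 → x i + x j ≤ (k : ℤ)} with hS
  set e : (Fin d → ℤ) → (Fin d → ℤ) :=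
    fun x i => if (i : ℕ) % 2 = 0 then (k : ℤ) - x i else x i with he
  have hinv : ∀ x, e (e x) = x := by
    intro x; funext i; simp only [he]; split <;> ring
  have hinj : Function.Injective e := Function.LeftInverse.injective hinv
  have hmem : ∀ y, e y ∈ S ↔ y ∈ ZigSet d (k : ℤ) := by
    intro y
    constructor
    · rintro ⟨hb, hp⟩
      refine ⟨fun i => ?_, fun i j hij => ?_⟩
      · have := hb i
        simp only [he] at this
        split at this <;> constructor <;> omega
      · have hpij := hp i j hij
        have hbi := hb i; have hbj := hb j
        have hj2 : (j : ℕ) % 2 = ((i : ℕ) + 1) % 2 := by rw [hij]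
        simp only [he] at hpij hbi hbj
        constructor <;> intro hpar <;>
          [ (rw [if_pos hpar] at hpij hbi;
             rw [if_neg (by omega : ¬ (j:ℕ) % 2 = 0)] at hpij hbj);
            (rw [if_neg (by omega : ¬ (i:ℕ) % 2 = 0)] at hpij hbi;
             rw [if_pos (by omega : (j:ℕ) % 2 = 0)] at hpij hbj) ] <;> omega
    · rintro ⟨hb, hp⟩
      refine ⟨fun i => ?_, fun i j hij => ?_⟩
      · have := hb i
        simp only [he]
        split <;> constructor <;> omega
      · have hpij := hp i j hij
        have hbi := hb i; have hbj := hb j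
        simp only [he]
        rcases Nat.even_or_odd (i : ℕ) with hpar | hpar
        · have h0 : (i : ℕ) % 2 = 0 := Nat.even_iff.mp hpar
          rw [if_pos h0, if_neg (by omega : ¬ (j:ℕ) % 2 = 0)]
          have := hpij.1 h0; omega
        · have h1 : (i : ℕ) % 2 = 1 := Nat.odd_iff.mp hpar
          rw [if_neg (by omega : ¬ (i:ℕ) % 2 = 0), if_pos (by omega : (j:ℕ) % 2 = 0)]
          have := hpij.2 h1; omega
  have himg : ZigSet d (k : ℤ) = e '' S := by
    ext y
    constructor
    · intro hy
      exact ⟨e y, (hmem y).mpr hy, hinv y⟩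
    · rintro ⟨x, hx, rfl⟩
      have := (hmem (e x)).mp (by rwa [hinv])
      exact this
  rw [FibPts, ← hS, himg, Set.ncard_image_of_injective _ hinj]

lemma card_nonInj (n k : ℕ) :
    (Set.ncard {y : Fin (n+1) → ℤ | (∀ i, 0 ≤ y i ∧ y i ≤ (k:ℤ)) ∧ ¬ Function.Injective y})
      ≤ (n+1)*(n+1)*(k+1)^n := by
  classical
  rw [← Nat.card_coe_set_eq]
  set S := {y : Fin (n+1) → ℤ | (∀ i, 0 ≤ y i ∧ y i ≤ (k:ℤ)) ∧ ¬ Function.Injective y} with hS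
  have hex : ∀ y : ↥S, ∃ p : Fin (n+1) × Fin (n+1), y.1 p.1 = y.1 p.2 ∧ p.1 ≠ p.2 := by
    rintro ⟨y, hy1, hy2⟩
    obtain ⟨a, b, hab, hne⟩ := Function.not_injective_iff.mp hy2
    exact ⟨(a, b), hab, hne⟩
  have hmem : ∀ (y : ↥S) (t : Fin (n+1)), y.1 t ∈ Finset.Icc (0:ℤ) (k:ℤ) :=
    fun y t => Finset.mem_Icc.mpr (y.2.1 t)
  set g : ↥S → (Fin (n+1) × Fin (n+1)) × (Fin n → ↥(Finset.Icc (0:ℤ) (k:ℤ))) :=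
    fun y => (Classical.choose (hex y),
      fun t => ⟨y.1 ((Classical.choose (hex y)).1.succAbove t), hmem y _⟩) with hg
  have hginj : Function.Injective g := by
    intro y y' h
    have h1 : Classical.choose (hex y) = Classical.choose (hex y') :=
      congrArg Prod.fst h
    have h2 := congrArg Prod.snd h
    simp only [hg] at h2
    set p := Classical.choose (hex y) with hp
    have hvals : ∀ t, y.1 (p.1.succAbove t) = y'.1 (p.1.succAbove t) := by
      intro t
      have h3 := congrArg Subtype.val (congrFun h2 t)
      simp only at h3
      rw [← h1] at h3
      exact h3
    have hsy := Classical.choose_spec (hex y)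
    have hsy' := Classical.choose_spec (hex y')
    rw [← h1] at hsy'
    apply Subtype.ext
    funext t
    by_cases ht : t = p.1
    · subst ht
      obtain ⟨z, hz⟩ := Fin.exists_succAbove_eq (show p.2 ≠ p.1 from fun hc => hsy.2 hc.symm)
      have h4 : y.1 p.2 = y'.1 p.2 := by rw [← hz]; exact hvals z
      rw [hsy.1, hsy'.1, h4]
    · obtain ⟨z, hz⟩ := Fin.exists_succAbove_eq ht
      rw [← hz]
      exact hvals z
  have hIcc : (Finset.Icc (0:ℤ) (k:ℤ)).card = k+1 := by rw [Int.card_Icc]; omega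
  calc Nat.card ↥S
      ≤ Nat.card ((Fin (n+1) × Fin (n+1)) × (Fin n → ↥(Finset.Icc (0:ℤ) (k:ℤ)))) :=
        Nat.card_le_card_of_injective g hginj
    _ = (n+1)*(n+1)*(k+1)^n := by
        rw [Nat.card_eq_fintype_card, Fintype.card_prod, Fintype.card_prod, Fintype.card_fin,
          Fintype.card_fun, Fintype.card_coe, Fintype.card_fin, hIcc]

lemma ext_le (m k : ℕ) : ExtFibPts m k ≤ (2*k+1)^m := by
  classical
  rw [ExtFibPts, ← Nat.card_coe_set_eq]
  set S := {x : Fin m → ℤ | (∀ i, |x i| ≤ (k : ℤ)) ∧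
    ∀ i j : Fin m, (j : ℕ) = (i : ℕ) + 1 → |x i| + |x j| ≤ (k : ℤ)} with hS
  set g : ↥S → (Fin m → ↥(Finset.Icc (-(k:ℤ)) (k:ℤ))) :=
    fun y t => ⟨y.1 t, Finset.mem_Icc.mpr (abs_le.mp (y.2.1 t))⟩ with hg
  have hginj : Function.Injective g := by
    intro y y' h
    apply Subtype.ext
    funext t
    exact congrArg Subtype.val (congrFun h t)
  have hIcc : (Finset.Icc (-(k:ℤ)) (k:ℤ)).card = 2*k+1 := by rw [Int.card_Icc]; omega
  calc Nat.card ↥S ≤ Nat.card (Fin m → ↥(Finset.Icc (-(k:ℤ)) (k:ℤ))) :=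
        Nat.card_le_card_of_injective g hginj
    _ = (2*k+1)^m := by
        rw [Nat.card_eq_fintype_card, Fintype.card_fun, Fintype.card_coe, Fintype.card_fin, hIcc]

lemma fib_bounds (n k : ℕ) :
    Alt (n+1) * (k+1).choose (n+1) ≤ FibPts (n+1) k ∧
    FibPts (n+1) k ≤ Alt (n+1) * (k+1).choose (n+1) + (n+1)*(n+1)*(k+1)^n := by
  have hzig := fib_eq_zig (n+1) k
  have hfinIcc : ∀ (s : Set (Fin (n+1) → ℤ)),
      (∀ y ∈ s, ∀ i, 0 ≤ y i ∧ y i ≤ (k:ℤ)) → s.Finite := by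
    intro s hs
    apply Set.Finite.subset (Set.Finite.pi (fun _ : Fin (n+1) => Set.finite_Icc (0:ℤ) (k:ℤ)))
    intro y hy
    rw [Set.mem_pi]
    intro i _
    exact Set.mem_Icc.mpr (hs y hy i)
  have hfinZ : (ZigSet (n+1) (k:ℤ)).Finite := hfinIcc _ (fun y hy => hy.1)
  have hfinI : (ZigInj (n+1) (k:ℤ)).Finite := hfinZ.subset (fun y hy => hy.1)
  have hfinN : ({y : Fin (n+1) → ℤ |
      (∀ i, 0 ≤ y i ∧ y i ≤ (k:ℤ)) ∧ ¬ Function.Injective y}).Finite :=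
    hfinIcc _ (fun y hy => hy.1)
  constructor
  · rw [hzig]
    calc Alt (n+1) * (k+1).choose (n+1)
        = Nat.card (ZigInj (n+1) (k:ℤ)) := by rw [card_zigInj]; ring
      _ = (ZigInj (n+1) (k:ℤ)).ncard := Nat.card_coe_set_eq _
      _ ≤ (ZigSet (n+1) (k:ℤ)).ncard := Set.ncard_le_ncard (fun y hy => hy.1) hfinZ
  · rw [hzig]
    have hsub : ZigSet (n+1) (k:ℤ) ⊆ ZigInj (n+1) (k:ℤ) ∪
        {y | (∀ i, 0 ≤ y i ∧ y i ≤ (k:ℤ)) ∧ ¬ Function.Injective y} := by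
      intro y hy
      by_cases hinj : Function.Injective y
      · exact Or.inl ⟨hy, hinj⟩
      · exact Or.inr ⟨hy.1, hinj⟩
    calc (ZigSet (n+1) (k:ℤ)).ncard
        ≤ (ZigInj (n+1) (k:ℤ) ∪
            {y | (∀ i, 0 ≤ y i ∧ y i ≤ (k:ℤ)) ∧ ¬ Function.Injective y}).ncard :=
          Set.ncard_le_ncard hsub (hfinI.union hfinN)
      _ ≤ (ZigInj (n+1) (k:ℤ)).ncard +
            ({y : Fin (n+1) → ℤ | (∀ i, 0 ≤ y i ∧ y i ≤ (k:ℤ)) ∧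
              ¬ Function.Injective y}).ncard := Set.ncard_union_le _ _
      _ ≤ Alt (n+1) * (k+1).choose (n+1) + (n+1)*(n+1)*(k+1)^n := by
          apply Nat.add_le_add
          · rw [← Nat.card_coe_set_eq, card_zigInj, Nat.mul_comm]
          · exact card_nonInj n k

open Filter in
theorem stmt6 (d : ℕ) (hd : 2 ≤ d) :
    Filter.Tendsto
      (fun a : ℕ =>
        (2^d * (FibPts d (a-1) : ℝ)) / ((2*(a : ℝ)+1)^d - (ExtFibPts (d-2) a : ℝ)))
      Filter.atTop
      (nhds ((Alt d : ℝ) / (Nat.factorial d : ℝ))) := by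
  obtain ⟨m, rfl⟩ : ∃ m, d = m + 2 := ⟨d - 2, by omega⟩
  clear hd
  simp only [Nat.add_sub_cancel]
  -- base limit (2a+1)/a → 2
  have hbase : Tendsto (fun a : ℕ => (2*(a:ℝ)+1)/(a:ℝ)) atTop (nhds 2) := by
    have h0 : Tendsto (fun a : ℕ => (2:ℝ) + ((a:ℝ))⁻¹) atTop (nhds (2 + 0)) :=
      tendsto_const_nhds.add tendsto_inv_atTop_nhds_zero_nat
    rw [add_zero] at h0
    apply h0.congr'
    filter_upwards [eventually_ge_atTop 1] with a ha
    have hpos : (0:ℝ) < (a:ℝ) := by exact_mod_cast Nat.pos_of_ne_zero (by omega)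
    field_simp
  -- choose limit
  have hC : Tendsto (fun a : ℕ => ((a.choose (m+2) : ℝ))/(a:ℝ)^(m+2)) atTop
      (nhds ((((m+2).factorial : ℝ))⁻¹)) := by
    have hprod : Tendsto (fun a : ℕ => ∏ i ∈ Finset.range (m+2), (((a:ℝ) - i)/(a:ℝ)))
        atTop (nhds 1) := by
      have h1 : ∀ i ∈ Finset.range (m+2),
          Tendsto (fun a : ℕ => ((a:ℝ) - i)/(a:ℝ)) atTop (nhds 1) := by
        intro i _
        have h2 : Tendsto (fun a : ℕ => 1 - (i:ℝ)/(a:ℝ)) atTop (nhds (1 - 0)) :=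
          tendsto_const_nhds.sub (tendsto_const_div_atTop_nhds_zero_nat (i:ℝ))
        rw [sub_zero] at h2
        apply h2.congr'
        filter_upwards [eventually_ge_atTop 1] with a ha
        have hpos : (0:ℝ) < (a:ℝ) := by exact_mod_cast Nat.pos_of_ne_zero (by omega)
        field_simp
      have := tendsto_finset_prod (Finset.range (m+2)) h1
      simpa using this
    have h2 : Tendsto (fun a : ℕ => (((m+2).factorial:ℝ))⁻¹ *
        ∏ i ∈ Finset.range (m+2), (((a:ℝ) - i)/(a:ℝ))) atTop
        (nhds ((((m+2).factorial:ℝ))⁻¹ * 1)) := hprod.const_mul _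
    rw [mul_one] at h2
    apply h2.congr'
    filter_upwards [eventually_ge_atTop (m+2)] with a ha
    have hpos : (0:ℝ) < (a:ℝ) := by exact_mod_cast Nat.pos_of_ne_zero (by omega)
    have hdesc : (a.descFactorial (m+2) : ℝ) = ∏ i ∈ Finset.range (m+2), ((a:ℝ) - i) := by
      rw [Nat.descFactorial_eq_prod_range, Nat.cast_prod]
      apply Finset.prod_congr rfl
      intro i hi
      have : i ≤ a := le_trans (le_of_lt (Finset.mem_range.mp hi)) ha
      rw [Nat.cast_sub this]
    have hchoose : (a.choose (m+2) : ℝ) = (a.descFactorial (m+2) : ℝ) / ((m+2).factorial : ℝ) := by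
      rw [Nat.descFactorial_eq_factorial_mul_choose]
      push_cast
      field_simp
    have hprodd : ∏ i ∈ Finset.range (m+2), (((a:ℝ) - i)/(a:ℝ))
        = (∏ i ∈ Finset.range (m+2), ((a:ℝ) - i)) / (a:ℝ)^(m+2) := by
      rw [Finset.prod_div_distrib, Finset.prod_const, Finset.card_range]
    rw [hprodd, hchoose, hdesc]
    field_simp
  -- numerator limit
  have hFib : Tendsto (fun a : ℕ => (FibPts (m+2) (a-1) : ℝ)/(a:ℝ)^(m+2)) atTop
      (nhds ((Alt (m+2):ℝ) * (((m+2).factorial : ℝ))⁻¹)) := by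
    have hlow : Tendsto (fun a : ℕ => (Alt (m+2):ℝ) * (((a.choose (m+2) : ℝ))/(a:ℝ)^(m+2)))
        atTop (nhds ((Alt (m+2):ℝ) * (((m+2).factorial : ℝ))⁻¹)) := hC.const_mul _
    have hhigh : Tendsto (fun a : ℕ => (Alt (m+2):ℝ) * (((a.choose (m+2) : ℝ))/(a:ℝ)^(m+2))
        + (((m+2)*(m+2) : ℕ):ℝ) * ((a:ℝ))⁻¹) atTop
        (nhds ((Alt (m+2):ℝ) * (((m+2).factorial : ℝ))⁻¹)) := by
      have := hlow.add ((tendsto_inv_atTop_nhds_zero_nat).const_mul (((m+2)*(m+2) : ℕ):ℝ))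
      simpa using this
    apply tendsto_of_tendsto_of_tendsto_of_le_of_le' hlow hhigh
    · filter_upwards [eventually_ge_atTop 1] with a ha
      have hpos : (0:ℝ) < (a:ℝ) := by exact_mod_cast Nat.pos_of_ne_zero (by omega)
      have hb := (fib_bounds (m+1) (a-1)).1
      rw [show a - 1 + 1 = a by omega] at hb
      have hcast : ((Alt (m+2) * a.choose (m+2) : ℕ):ℝ) ≤ (FibPts (m+2) (a-1) : ℝ) := by
        exact_mod_cast hb
      push_cast at hcast
      rw [← mul_div_assoc]
      exact div_le_div_of_nonneg_right hcast (by positivity)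
    · filter_upwards [eventually_ge_atTop 1] with a ha
      have hpos : (0:ℝ) < (a:ℝ) := by exact_mod_cast Nat.pos_of_ne_zero (by omega)
      have hb := (fib_bounds (m+1) (a-1)).2
      rw [show a - 1 + 1 = a by omega] at hb
      have hcast : (FibPts (m+2) (a-1) : ℝ) ≤
          (Alt (m+2):ℝ) * (a.choose (m+2):ℝ) + ((m+2)*(m+2):ℕ) * (a:ℝ)^(m+1) := by
        have := (Nat.cast_le (α := ℝ)).mpr hb
        push_cast at this ⊢
        linarith
      have h1 : (FibPts (m+2) (a-1) : ℝ)/(a:ℝ)^(m+2) ≤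
          ((Alt (m+2):ℝ) * (a.choose (m+2):ℝ) + ((m+2)*(m+2):ℕ) * (a:ℝ)^(m+1))/(a:ℝ)^(m+2) :=
        div_le_div_of_nonneg_right hcast (by positivity) |>.trans_eq rfl
      apply h1.trans_eq
      rw [add_div, mul_div_assoc, mul_div_assoc]
      congr 1
      rw [pow_succ]
      field_simp
      ring
  -- denominator limit
  have hE : Tendsto (fun a : ℕ => ((2*(a:ℝ)+1)^(m+2) - (ExtFibPts m a : ℝ))/(a:ℝ)^(m+2))
      atTop (nhds ((2:ℝ)^(m+2))) := by
    have hhigh : Tendsto (fun a : ℕ => ((2*(a:ℝ)+1)/(a:ℝ))^(m+2)) atTop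
        (nhds ((2:ℝ)^(m+2))) := hbase.pow (m+2)
    have hlow : Tendsto (fun a : ℕ => ((2*(a:ℝ)+1)/(a:ℝ))^(m+2)
        - ((2*(a:ℝ)+1)/(a:ℝ))^m * (((a:ℝ))⁻¹)^2) atTop (nhds ((2:ℝ)^(m+2))) := by
      have := hhigh.sub ((hbase.pow m).mul ((tendsto_inv_atTop_nhds_zero_nat).pow 2))
      simpa using this
    apply tendsto_of_tendsto_of_tendsto_of_le_of_le' hlow hhigh
    · filter_upwards [eventually_ge_atTop 1] with a ha
      have hpos : (0:ℝ) < (a:ℝ) := by exact_mod_cast Nat.pos_of_ne_zero (by omega)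
      have hext : (ExtFibPts m a : ℝ) ≤ (2*(a:ℝ)+1)^m := by
        have := (Nat.cast_le (α := ℝ)).mpr (ext_le m a)
        push_cast at this
        linarith
      have heq : ((2*(a:ℝ)+1)/(a:ℝ))^(m+2) - ((2*(a:ℝ)+1)/(a:ℝ))^m * (((a:ℝ))⁻¹)^2
          = ((2*(a:ℝ)+1)^(m+2) - (2*(a:ℝ)+1)^m)/(a:ℝ)^(m+2) := by
        rw [div_pow, div_pow, sub_div]
        congr 1
        rw [show m + 2 = m + 2 from rfl]
        field_simp
        ring
      rw [heq]
      apply div_le_div_of_nonneg_right _ (by positivity)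
      linarith
    · filter_upwards [eventually_ge_atTop 1] with a ha
      have hpos : (0:ℝ) < (a:ℝ) := by exact_mod_cast Nat.pos_of_ne_zero (by omega)
      rw [show ((2*(a:ℝ)+1)/(a:ℝ))^(m+2) = (2*(a:ℝ)+1)^(m+2)/(a:ℝ)^(m+2) from div_pow _ _ _]
      apply div_le_div_of_nonneg_right _ (by positivity)
      have : (0:ℝ) ≤ (ExtFibPts m a : ℝ) := Nat.cast_nonneg _
      linarith
  -- assemble
  have hNum : Tendsto (fun a : ℕ => (2:ℝ)^(m+2) * ((FibPts (m+2) (a-1) : ℝ)/(a:ℝ)^(m+2)))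
      atTop (nhds ((2:ℝ)^(m+2) * ((Alt (m+2):ℝ) * (((m+2).factorial : ℝ))⁻¹))) :=
    hFib.const_mul _
  have hdiv := hNum.div hE (by positivity)
  have hval : ((2:ℝ)^(m+2) * ((Alt (m+2):ℝ) * (((m+2).factorial:ℝ))⁻¹)) / (2:ℝ)^(m+2)
      = (Alt (m+2):ℝ) / (((m+2).factorial : ℝ)) := by
    rw [mul_div_cancel_left₀ _ (by positivity : ((2:ℝ)^(m+2)) ≠ 0), div_eq_mul_inv]
  rw [hval] at hdiv
  apply hdiv.congr'
  filter_upwards [eventually_ge_atTop 1] with a ha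
  have hpos : (0:ℝ) < (a:ℝ) := by exact_mod_cast Nat.pos_of_ne_zero (by omega)
  have hc : ((a:ℝ))^(m+2) ≠ 0 := by positivity
  simp only [Pi.div_apply]
  rw [mul_div_assoc']
  rcases eq_or_ne ((2*(a:ℝ)+1)^(m+2) - (ExtFibPts m a : ℝ)) 0 with h0 | h0
  · rw [h0]
    simp
  · rw [div_div_div_eq]
    rw [div_eq_div_iff (by exact mul_ne_zero hc h0) h0]
    ring
end

section
/- Let a ≥ 1 and d ≥ 2 be integers. Then (2a+1)^d > E(d−2, a), (2a+1)^{d+1} > E(d−1, a), and in ℚ one has the strict inequality (2^{d+1} · F(d+1, a−1)) / ((2a+1)^{d+1} − E(d−1, a)) < (2^d · F(d, a−1)) / ((2a+1)^d − E(d−2, a)). (Equivalently, for p = 2a+1 an odd prime, the Hilbert–Kunz multiplicity of the quadric satisfies e_HK(A_{p,d}) > e_HK(A_{p,d+1}).) -/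
lemma extSet_finite (d k : ℕ) :
    {x : Fin d → ℤ | (∀ i, |x i| ≤ (k : ℤ)) ∧
      ∀ i j : Fin d, (j : ℕ) = (i : ℕ) + 1 → |x i| + |x j| ≤ (k : ℤ)}.Finite := by
  apply Set.Finite.subset (Set.Finite.pi (fun _ : Fin d => Set.finite_Icc (-(k:ℤ)) k))
  intro x hx
  simp only [Set.mem_pi, Set.mem_univ, Set.mem_Icc, forall_true_left]
  intro i
  have := hx.1 i
  constructor <;> [exact neg_le_of_abs_le this; exact le_of_abs_le this]

lemma fibSet_finite (d k : ℕ) :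
    {x : Fin d → ℤ | (∀ i, 0 ≤ x i ∧ x i ≤ (k : ℤ)) ∧
      ∀ i j : Fin d, (j : ℕ) = (i : ℕ) + 1 → x i + x j ≤ (k : ℤ)}.Finite := by
  apply Set.Finite.subset (Set.Finite.pi (fun _ : Fin d => Set.finite_Icc (0:ℤ) k))
  intro x hx
  simp only [Set.mem_pi, Set.mem_univ, Set.mem_Icc, forall_true_left]
  exact fun i => hx.1 i

lemma fib_pos (d k : ℕ) : 0 < FibPts d k := by
  rw [FibPts]
  rw [Set.ncard_pos (fibSet_finite d k)]
  refine ⟨0, ⟨fun i => ⟨le_refl _, by positivity⟩, fun i j _ => by simpa using Int.ofNat_nonneg k⟩⟩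

lemma fib_succ_le (d k : ℕ) : FibPts (d+1) k ≤ (k+1) * FibPts d k := by
  classical
  rw [FibPts, FibPts]
  set S : Set (Fin (d+1) → ℤ) := {x | (∀ i, 0 ≤ x i ∧ x i ≤ (k : ℤ)) ∧
    ∀ i j : Fin (d+1), (j : ℕ) = (i : ℕ) + 1 → x i + x j ≤ (k : ℤ)} with hSdef
  set T : Set (Fin d → ℤ) := {x | (∀ i, 0 ≤ x i ∧ x i ≤ (k : ℤ)) ∧
    ∀ i j : Fin d, (j : ℕ) = (i : ℕ) + 1 → x i + x j ≤ (k : ℤ)} with hTdef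
  have hTfin : T.Finite := fibSet_finite d k
  have : Finite T := hTfin.to_subtype
  have hmem : ∀ x : S, (fun i : Fin d => x.1 i.castSucc) ∈ T := by
    intro x
    refine ⟨fun i => x.2.1 _, fun i j hij => x.2.2 i.castSucc j.castSucc ?_⟩
    simp at hij ⊢; omega
  have hlt : ∀ x : S, (x.1 (Fin.last d)).toNat < k + 1 := by
    intro x
    have h := x.2.1 (Fin.last d)
    omega
  have hinj : Function.Injective (fun x : S =>
      ((⟨fun i => x.1 i.castSucc, hmem x⟩ : T), (⟨(x.1 (Fin.last d)).toNat, hlt x⟩ : Fin (k+1)))) := by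
    intro x y hxy
    have h1 := congrArg Prod.fst hxy
    have h2 := congrArg Prod.snd hxy
    simp only [Subtype.mk.injEq, Fin.mk.injEq] at h1 h2
    apply Subtype.ext
    funext i
    refine Fin.lastCases ?_ ?_ i
    · have hx := (x.2.1 (Fin.last d)).1
      have hy := (y.2.1 (Fin.last d)).1
      omega
    · intro j
      exact congrFun h1 j
  calc Set.ncard S = Nat.card S := rfl
    _ ≤ Nat.card (T × Fin (k+1)) := Nat.card_le_card_of_injective _ hinj
    _ = Nat.card T * (k+1) := by rw [Nat.card_prod]; simp
    _ = (k+1) * Set.ncard T := by rw [Nat.mul_comm]; rfl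

theorem stmt7 (a d : ℕ) (ha : 1 ≤ a) (hd : 2 ≤ d) :
    ExtFibPts (d-2) a < (2*a+1)^d ∧
    ExtFibPts (d-1) a < (2*a+1)^(d+1) ∧
    (2^(d+1) * (FibPts (d+1) (a-1) : ℚ)) / ((2*(a : ℚ)+1)^(d+1) - (ExtFibPts (d-1) a : ℚ))
      < (2^d * (FibPts d (a-1) : ℚ)) / ((2*(a : ℚ)+1)^d - (ExtFibPts (d-2) a : ℚ)) := by
  obtain ⟨e, rfl⟩ : ∃ e, d = e + 2 := ⟨d - 2, by omega⟩
  obtain ⟨b, rfl⟩ : ∃ b, a = b + 1 := ⟨a - 1, by omega⟩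
  have hd2 : e + 2 - 2 = e := by omega
  have hd1 : e + 2 - 1 = e + 1 := by omega
  have ha1 : b + 1 - 1 = b := by omega
  rw [hd2, hd1, ha1]
  set a := b + 1 with haa
  have hp : 1 < 2*a+1 := by omega
  have hE2 : ExtFibPts e a ≤ (2*a+1)^e := ext_le e a
  have hE1 : ExtFibPts (e+1) a ≤ (2*a+1)^(e+1) := ext_le (e+1) a
  have c1 : ExtFibPts e a < (2*a+1)^(e+2) :=
    lt_of_le_of_lt hE2 (Nat.pow_lt_pow_right hp (by omega))
  have c2 : ExtFibPts (e+1) a < (2*a+1)^(e+2+1) :=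
    lt_of_le_of_lt hE1 (Nat.pow_lt_pow_right hp (by omega))
  refine ⟨c1, c2, ?_⟩
  -- rational versions
  set p : ℚ := 2*(a:ℚ)+1 with hpq
  have hpcast : ((2*a+1 : ℕ) : ℚ) = p := by push_cast [hpq]; ring
  set E2 : ℚ := (ExtFibPts e a : ℚ) with hE2q
  set E1 : ℚ := (ExtFibPts (e+1) a : ℚ) with hE1q
  set Fd : ℚ := (FibPts (e+2) b : ℚ) with hFdq
  set Fd1 : ℚ := (FibPts (e+2+1) b : ℚ) with hFd1q
  have hppos : (0:ℚ) < p := by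
    have : (1:ℚ) ≤ (a:ℚ) := by exact_mod_cast Nat.one_le_cast.mpr ha
    nlinarith
  have hqE2 : E2 ≤ p^e := by
    rw [hE2q, ← hpcast]
    exact_mod_cast hE2
  have hqE1 : E1 ≤ p^(e+1) := by
    rw [hE1q, ← hpcast]
    exact_mod_cast hE1
  have hqF : Fd1 ≤ (a:ℚ) * Fd := by
    have := fib_succ_le (e+2) b
    have hba : b + 1 = a := rfl
    calc Fd1 = ((FibPts (e+2+1) b : ℕ) : ℚ) := hFd1q
      _ ≤ (((b+1) * FibPts (e+2) b : ℕ) : ℚ) := by exact_mod_cast this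
      _ = (a:ℚ) * Fd := by rw [hFdq]; push_cast [hba]; ring
  have hqFpos : (1:ℚ) ≤ Fd := by
    rw [hFdq]; exact_mod_cast fib_pos (e+2) b
  have hppow : ∀ m n : ℕ, m < n → p^m < p^n := by
    intro m n hmn
    apply pow_lt_pow_right₀ ?_ hmn
    have : (1:ℚ) ≤ (a:ℚ) := by exact_mod_cast Nat.one_le_cast.mpr ha
    nlinarith
  have hD1 : (0:ℚ) < p^(e+2) - E2 := by
    have := hppow e (e+2) (by omega); linarith
  have hD2 : (0:ℚ) < p^(e+2+1) - E1 := by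
    have := hppow (e+1) (e+3) (by omega); linarith
  rw [div_lt_div_iff₀ hD2 hD1]
  -- key: 2*a*(p^(e+2) - E2) < p^(e+3) - E1
  have hkey : 2*(a:ℚ)*(p^(e+2) - E2) < p^(e+2+1) - E1 := by
    have h1 : p^(e+2+1) = p * p^(e+2) := by ring
    have h2 : E1 < p^(e+2) := lt_of_le_of_lt hqE1 (hppow (e+1) (e+2) (by omega))
    have hE2nn : 0 ≤ E2 := by rw [hE2q]; positivity
    have hanum : 0 ≤ (a:ℚ) := by positivity
    nlinarith
  have h2pow : (0:ℚ) < 2^(e+2) := by positivity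
  have hFd1nn : 0 ≤ Fd1 := by rw [hFd1q]; positivity
  calc 2^(e+2+1) * Fd1 * (p^(e+2) - E2)
      ≤ 2^(e+2+1) * ((a:ℚ) * Fd) * (p^(e+2) - E2) := by
        apply mul_le_mul_of_nonneg_right _ (le_of_lt hD1)
        exact mul_le_mul_of_nonneg_left hqF (by positivity)
    _ = 2^(e+2) * Fd * (2*(a:ℚ)*(p^(e+2) - E2)) := by ring
    _ < 2^(e+2) * Fd * (p^(e+2+1) - E1) := by
        apply mul_lt_mul_of_pos_left hkey
        nlinarith
end

section
/- For all integers d ≥ 1 and a ≥ 1, one has F(d+1, a) < (a+1) · F(d, a). -/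
def FibSet (d k : ℕ) : Set (Fin d → ℤ) :=
  {x : Fin d → ℤ | (∀ i, 0 ≤ x i ∧ x i ≤ (k : ℤ)) ∧
    ∀ i j : Fin d, (j : ℕ) = (i : ℕ) + 1 → x i + x j ≤ (k : ℤ)}

lemma fibPts_eq (d k : ℕ) : FibPts d k = (FibSet d k).ncard := rfl

lemma fibSet_finite_s8 (d k : ℕ) : (FibSet d k).Finite := by
  apply Set.Finite.subset (Set.Finite.pi (fun _ : Fin d => Set.finite_Icc (0:ℤ) k))
  intro x hx i _
  exact ⟨(hx.1 i).1, (hx.1 i).2⟩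

lemma ncard_prod' {α β : Type*} (s : Set α) (t : Set β) :
    (s ×ˢ t).ncard = s.ncard * t.ncard := by
  rw [← Nat.card_coe_set_eq, ← Nat.card_coe_set_eq, ← Nat.card_coe_set_eq,
    Nat.card_congr (Equiv.Set.prod s t), Nat.card_prod]

theorem stmt8 (d a : ℕ) (hd : 1 ≤ d) (ha : 1 ≤ a) :
    FibPts (d+1) a < (a+1) * FibPts d a := by
  classical
  set f : (Fin (d+1) → ℤ) → ℤ × (Fin d → ℤ) :=
    fun x => (x (Fin.last d), fun i => x i.castSucc) with hf
  have hinj : Function.Injective f := by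
    intro x y h
    have h1 := congrArg Prod.fst h
    have h2 := congrArg Prod.snd h
    simp only [hf] at h1 h2
    funext i
    refine Fin.lastCases h1 (fun j => ?_) i
    exact congrFun h2 j
  -- the product set
  set P : Set (ℤ × (Fin d → ℤ)) := (Set.Icc (0:ℤ) a) ×ˢ FibSet d a with hP
  have hPfin : P.Finite := (Set.finite_Icc _ _).prod (fibSet_finite_s8 d a)
  -- image is inside P
  have himg : f '' FibSet (d+1) a ⊆ P := by
    rintro _ ⟨x, hx, rfl⟩
    refine ⟨⟨(hx.1 _).1, (hx.1 _).2⟩, ⟨fun i => ⟨(hx.1 _).1, (hx.1 _).2⟩, ?_⟩⟩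
    intro i j hij
    exact hx.2 i.castSucc j.castSucc (by simpa using hij)
  -- the bad point
  set xstar : Fin d → ℤ := fun i => if (i : ℕ) = d - 1 then (a:ℤ) else 0 with hxs
  have hxstar : xstar ∈ FibSet d a := by
    constructor
    · intro i
      by_cases h : (i : ℕ) = d - 1 <;> simp [hxs, h]
    · intro i j hij
      have hjne : (i : ℕ) ≠ d - 1 := by
        intro h
        have : (j : ℕ) < d := j.isLt
        omega
      have : ((a:ℤ)) + 0 ≤ a ∨ (0:ℤ) + 0 ≤ a := by right; positivity
      by_cases h : (j : ℕ) = d - 1 <;> simp [hxs, h, hjne]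
  have hbadP : ((a:ℤ), xstar) ∈ P := ⟨⟨by positivity, le_refl _⟩, hxstar⟩
  have hbadnot : ((a:ℤ), xstar) ∉ f '' FibSet (d+1) a := by
    rintro ⟨x, hx, hfx⟩
    have h1 : x (Fin.last d) = a := congrArg Prod.fst hfx
    have h2 : x (Fin.castSucc ⟨d-1, by omega⟩) = a := by
      have := congrFun (congrArg Prod.snd hfx) ⟨d-1, by omega⟩
      simpa [hxs, hf] using this
    have hc := hx.2 (Fin.castSucc ⟨d-1, by omega⟩) (Fin.last d) (by simp; omega)
    rw [h1, h2] at hc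
    have : (1:ℤ) ≤ a := by exact_mod_cast ha
    linarith
  have hss : f '' FibSet (d+1) a ⊂ P := ⟨himg, fun h => hbadnot (h hbadP)⟩
  have hlt : (f '' FibSet (d+1) a).ncard < P.ncard := Set.ncard_lt_ncard hss hPfin
  rw [Set.ncard_image_of_injective _ hinj] at hlt
  have hPcard : P.ncard = (a+1) * FibPts d a := by
    rw [hP, ncard_prod', fibPts_eq]
    congr 1
    rw [← Finset.coe_Icc, Set.ncard_coe_finset, Int.card_Icc]
    simp
  rw [fibPts_eq, ← hPcard]
  exact hlt
end

section
/- Let d ≥ 1 be an integer. The Lebesgue measure (volume) of the set {x ∈ ℝ^d : 0 ≤ x_i ≤ 1 for all 1 ≤ i ≤ d, and x_i + x_{i+1} ≤ 1 for all 1 ≤ i ≤ d−1} (the d-dimensional Fibonacci polytope) equals Alt(d)/d!. -/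
open MeasureTheory Set

namespace Stmt10Aux

variable {d : ℕ}

/-- the order simplex of a permutation inside the cube -/
def simplex (σ : Equiv.Perm (Fin d)) : Set (Fin d → ℝ) :=
  {t | (∀ i, 0 ≤ t i ∧ t i ≤ 1) ∧ ∀ k l : Fin d, k < l → t (σ k) < t (σ l)}

def cube (d : ℕ) : Set (Fin d → ℝ) := {t | ∀ i, 0 ≤ t i ∧ t i ≤ 1}

lemma measurableSet_cube : MeasurableSet (cube d) := by
  have : cube d = ⋂ i, ({t : Fin d → ℝ | 0 ≤ t i} ∩ {t | t i ≤ 1}) := by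
    ext t; simp [cube, forall_and]
  rw [this]
  exact MeasurableSet.iInter fun i =>
    ((measurableSet_le measurable_const (measurable_pi_apply i)).inter
      (measurableSet_le (measurable_pi_apply i) measurable_const))

lemma volume_cube : volume (cube d) = 1 := by
  have : cube d = Set.pi Set.univ (fun _ : Fin d => Set.Icc (0:ℝ) 1) := by
    ext t
    simp only [cube, Set.mem_setOf_eq, Set.mem_pi, Set.mem_univ, Set.mem_Icc, true_implies]
  rw [this, volume_pi_pi]
  simp [Real.volume_Icc]

lemma measurableSet_simplex (σ : Equiv.Perm (Fin d)) : MeasurableSet (simplex σ) := by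
  have : simplex σ = cube d ∩
      ⋂ (k : Fin d) (l : Fin d) (_ : k < l), {t : Fin d → ℝ | t (σ k) < t (σ l)} := by
    ext t; simp [simplex, cube]
  rw [this]
  exact measurableSet_cube.inter (MeasurableSet.iInter fun k => MeasurableSet.iInter fun l =>
    MeasurableSet.iInter fun _ =>
      measurableSet_lt (measurable_pi_apply _) (measurable_pi_apply _))

lemma strictMono_of_mem {σ : Equiv.Perm (Fin d)} {t : Fin d → ℝ} (ht : t ∈ simplex σ) :
    StrictMono (t ∘ σ) := fun k l h => ht.2 k l h

lemma injective_of_mem {σ : Equiv.Perm (Fin d)} {t : Fin d → ℝ} (ht : t ∈ simplex σ) :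
    Function.Injective t := by
  intro a b hab
  have h : σ.symm a = σ.symm b := (strictMono_of_mem ht).injective (by simpa using hab)
  simpa using congrArg σ h

lemma eq_of_mem_inter {σ τ : Equiv.Perm (Fin d)} {t : Fin d → ℝ}
    (hσ : t ∈ simplex σ) (hτ : t ∈ simplex τ) : σ = τ := by
  have hinj : Function.Injective t := injective_of_mem hσ
  set s : Finset ℝ := Finset.image t Finset.univ with hs
  have hcard : s.card = d := by
    rw [hs, Finset.card_image_of_injective _ hinj, Finset.card_univ, Fintype.card_fin]
  have h1 : (t ∘ σ) = ⇑(s.orderEmbOfFin hcard) :=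
    Finset.orderEmbOfFin_unique hcard (fun x => Finset.mem_image_of_mem t (Finset.mem_univ _))
      (strictMono_of_mem hσ)
  have h2 : (t ∘ τ) = ⇑(s.orderEmbOfFin hcard) :=
    Finset.orderEmbOfFin_unique hcard (fun x => Finset.mem_image_of_mem t (Finset.mem_univ _))
      (strictMono_of_mem hτ)
  ext k
  have : t (σ k) = t (τ k) := by
    have := congrFun (h1.trans h2.symm) k
    simpa using this
  exact congrArg _ (hinj this)

lemma pairwise_disjoint_simplex :
    Pairwise fun σ τ : Equiv.Perm (Fin d) => Disjoint (simplex σ) (simplex τ) := by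
  intro σ τ hστ
  rw [Set.disjoint_left]
  intro t hσ hτ
  exact hστ (eq_of_mem_inter hσ hτ)

lemma mem_simplex_sort {t : Fin d → ℝ} (ht : t ∈ cube d) (hinj : Function.Injective t) :
    t ∈ simplex (Tuple.sort t) := by
  refine ⟨ht, ?_⟩
  have hmono : Monotone (t ∘ Tuple.sort t) := Tuple.monotone_sort t
  have hinj' : Function.Injective (t ∘ Tuple.sort t) :=
    hinj.comp (Tuple.sort t).injective
  exact fun k l h => hmono.strictMono_of_injective hinj' h

lemma iUnion_simplex :
    (⋃ σ : Equiv.Perm (Fin d), simplex σ) = cube d ∩ {t | Function.Injective t} := by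
  ext t
  simp only [Set.mem_iUnion, Set.mem_inter_iff, Set.mem_setOf_eq]
  constructor
  · rintro ⟨σ, hσ⟩
    exact ⟨hσ.1, injective_of_mem hσ⟩
  · rintro ⟨h1, h2⟩
    exact ⟨Tuple.sort t, mem_simplex_sort h1 h2⟩

lemma volume_noninj : volume {t : Fin d → ℝ | ¬ Function.Injective t} = 0 := by
  have hsub : {t : Fin d → ℝ | ¬ Function.Injective t} ⊆
      ⋃ (i : Fin d) (j : Fin d) (_ : i ≠ j), {t : Fin d → ℝ | t i = t j} := by
    intro t ht
    simp only [Function.Injective, not_forall] at ht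
    obtain ⟨i, j, hij, hne⟩ := ht
    simp only [Set.mem_iUnion]
    exact ⟨i, j, hne, hij⟩
  refine measure_mono_null hsub ?_
  refine measure_iUnion_null fun i => measure_iUnion_null fun j => measure_iUnion_null fun hij => ?_
  have : {t : Fin d → ℝ | t i = t j} =
      ↑(LinearMap.ker ((LinearMap.proj i : (Fin d → ℝ) →ₗ[ℝ] ℝ) - LinearMap.proj j)) := by
    ext t
    simp [LinearMap.mem_ker, sub_eq_zero]
  rw [this]
  apply Measure.addHaar_submodule
  intro htop
  have h1 : (Function.update (0 : Fin d → ℝ) i 1) ∈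
      LinearMap.ker ((LinearMap.proj i : (Fin d → ℝ) →ₗ[ℝ] ℝ) - LinearMap.proj j) := by
    rw [htop]; trivial
  simp only [LinearMap.mem_ker, LinearMap.sub_apply, LinearMap.proj_apply] at h1
  rw [Function.update_self, Function.update_of_ne (Ne.symm hij)] at h1
  simp at h1

lemma volume_simplex_eq_one (σ : Equiv.Perm (Fin d)) :
    volume (simplex σ) = volume (simplex (1 : Equiv.Perm (Fin d))) := by
  set Φ := MeasurableEquiv.piCongrLeft (fun _ : Fin d => ℝ) (σ⁻¹ : Equiv.Perm (Fin d)) with hΦ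
  have hΦapp : ∀ (g : Fin d → ℝ) (b : Fin d), Φ g b = g (σ b) := by
    intro g b
    have := MeasurableEquiv.piCongrLeft_apply_apply (β := fun _ : Fin d => ℝ)
      (σ⁻¹ : Fin d ≃ Fin d) g (σ b)
    simpa using this
  have hpre : simplex σ = Φ ⁻¹' (simplex (1 : Equiv.Perm (Fin d))) := by
    ext t
    simp only [Set.mem_preimage, simplex, Set.mem_setOf_eq, Equiv.Perm.coe_one, id_eq, hΦapp]
    constructor
    · rintro ⟨h1, h2⟩
      exact ⟨fun i => h1 (σ i), h2⟩
    · rintro ⟨h1, h2⟩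
      refine ⟨fun i => ?_, h2⟩
      simpa using h1 (σ⁻¹ i)
  rw [hpre]
  exact (volume_measurePreserving_piCongrLeft (fun _ : Fin d => ℝ) (σ⁻¹ : Equiv.Perm (Fin d))).measure_preimage
    (measurableSet_simplex _).nullMeasurableSet

lemma volume_simplex (σ : Equiv.Perm (Fin d)) :
    volume (simplex σ) = ((d.factorial : ENNReal))⁻¹ := by
  classical
  have hvol : volume (⋃ τ : Equiv.Perm (Fin d), simplex τ) = 1 := by
    rw [iUnion_simplex]
    have hle1 : volume (cube d ∩ {t : Fin d → ℝ | Function.Injective t}) ≤ 1 := by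
      calc volume (cube d ∩ _) ≤ volume (cube d) := measure_mono Set.inter_subset_left
      _ = 1 := volume_cube
    have hge1 : (1 : ENNReal) ≤ volume (cube d ∩ {t : Fin d → ℝ | Function.Injective t}) := by
      have : cube d ⊆ (cube d ∩ {t : Fin d → ℝ | Function.Injective t}) ∪
          {t : Fin d → ℝ | ¬ Function.Injective t} := by
        intro t ht
        by_cases h : Function.Injective t
        · exact Or.inl ⟨ht, h⟩
        · exact Or.inr h
      calc (1 : ENNReal) = volume (cube d) := volume_cube.symm
      _ ≤ volume ((cube d ∩ {t : Fin d → ℝ | Function.Injective t}) ∪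
          {t : Fin d → ℝ | ¬ Function.Injective t}) := measure_mono this
      _ ≤ volume (cube d ∩ {t : Fin d → ℝ | Function.Injective t}) +
          volume {t : Fin d → ℝ | ¬ Function.Injective t} := measure_union_le _ _
      _ = volume (cube d ∩ {t : Fin d → ℝ | Function.Injective t}) := by
          rw [volume_noninj, add_zero]
    exact le_antisymm hle1 hge1
  have hsum : volume (⋃ τ : Equiv.Perm (Fin d), simplex τ) =
      (d.factorial : ENNReal) * volume (simplex (1 : Equiv.Perm (Fin d))) := by
    rw [measure_iUnion pairwise_disjoint_simplex (fun τ => measurableSet_simplex τ)]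
    rw [tsum_fintype]
    calc ∑ τ : Equiv.Perm (Fin d), volume (simplex τ)
        = ∑ _τ : Equiv.Perm (Fin d), volume (simplex (1 : Equiv.Perm (Fin d))) := by
          exact Finset.sum_congr rfl fun τ _ => volume_simplex_eq_one τ
      _ = (Fintype.card (Equiv.Perm (Fin d)) : ENNReal) *
            volume (simplex (1 : Equiv.Perm (Fin d))) := by
          rw [Finset.sum_const, Finset.card_univ, nsmul_eq_mul]
      _ = (d.factorial : ENNReal) * volume (simplex (1 : Equiv.Perm (Fin d))) := by
          rw [Fintype.card_perm, Fintype.card_fin]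
  rw [hvol] at hsum
  have hfact0 : (d.factorial : ENNReal) ≠ 0 := by
    exact_mod_cast Nat.factorial_ne_zero d
  have hfactt : (d.factorial : ENNReal) ≠ ⊤ := ENNReal.natCast_ne_top _
  have h1 : volume (simplex (1 : Equiv.Perm (Fin d))) = ((d.factorial : ENNReal))⁻¹ := by
    have hc : ((d.factorial : ENNReal))⁻¹ * ((d.factorial : ENNReal) * volume (simplex (1 : Equiv.Perm (Fin d)))) = volume (simplex (1 : Equiv.Perm (Fin d))) := by
      rw [← mul_assoc, ENNReal.inv_mul_cancel hfact0 hfactt, one_mul]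
    rw [← hc, ← hsum, mul_one]
  rw [volume_simplex_eq_one σ, h1]

end Stmt10Aux
namespace Stmt10Aux


/-- the alternating region -/
def R (d : ℕ) : Set (Fin d → ℝ) :=
  {t | (∀ i, 0 ≤ t i ∧ t i ≤ 1) ∧
    ∀ i j : Fin d, (j : ℕ) = (i : ℕ) + 1 →
      (((i : ℕ) % 2 = 0 → t j ≤ t i) ∧ ((i : ℕ) % 2 = 1 → t i ≤ t j))}

lemma measurableSet_R : MeasurableSet (R d) := by
  have hR : R d = cube d ∩ ⋂ (i : Fin d) (j : Fin d),
      {t : Fin d → ℝ | (j:ℕ) = (i:ℕ)+1 →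
        (((i:ℕ)%2 = 0 → t j ≤ t i) ∧ ((i:ℕ)%2 = 1 → t i ≤ t j))} := by
    ext t
    simp only [R, cube, Set.mem_inter_iff, Set.mem_setOf_eq, Set.mem_iInter]
  rw [hR]
  refine measurableSet_cube.inter (MeasurableSet.iInter fun i => MeasurableSet.iInter fun j => ?_)
  by_cases h : (j:ℕ) = (i:ℕ)+1
  · rcases Nat.mod_two_eq_zero_or_one (i:ℕ) with h0 | h0
    · have : {t : Fin d → ℝ | (j:ℕ) = (i:ℕ)+1 →
          (((i:ℕ)%2 = 0 → t j ≤ t i) ∧ ((i:ℕ)%2 = 1 → t i ≤ t j))} =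
          {t : Fin d → ℝ | t j ≤ t i} := by
        ext t; simp [h, h0]
      rw [this]
      exact measurableSet_le (measurable_pi_apply _) (measurable_pi_apply _)
    · have : {t : Fin d → ℝ | (j:ℕ) = (i:ℕ)+1 →
          (((i:ℕ)%2 = 0 → t j ≤ t i) ∧ ((i:ℕ)%2 = 1 → t i ≤ t j))} =
          {t : Fin d → ℝ | t i ≤ t j} := by
        ext t; simp [h, h0]
      rw [this]
      exact measurableSet_le (measurable_pi_apply _) (measurable_pi_apply _)
  · have : {t : Fin d → ℝ | (j:ℕ) = (i:ℕ)+1 →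
        (((i:ℕ)%2 = 0 → t j ≤ t i) ∧ ((i:ℕ)%2 = 1 → t i ≤ t j))} = Set.univ := by
      ext t; simp [h]
    rw [this]
    exact MeasurableSet.univ

lemma R_inter_inj :
    R d ∩ {t | Function.Injective t}
      = ⋃ (σ : Equiv.Perm (Fin d)) (_ : IsAlternating σ⁻¹), simplex σ := by
  ext t
  simp only [Set.mem_inter_iff, Set.mem_setOf_eq, Set.mem_iUnion]
  constructor
  · rintro ⟨⟨hcube, hpat⟩, hinj⟩
    refine ⟨Tuple.sort t, ?_, mem_simplex_sort hcube hinj⟩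
    have hsm : StrictMono (t ∘ Tuple.sort t) := strictMono_of_mem (mem_simplex_sort hcube hinj)
    intro i j hji
    have hij : i ≠ j := by
      intro h; rw [h] at hji; omega
    constructor
    · intro hev
      have h1 : t j < t i :=
        lt_of_le_of_ne ((hpat i j hji).1 hev) (fun h => hij (hinj h).symm)
      have h2 : (t ∘ Tuple.sort t) ((Tuple.sort t)⁻¹ j) < (t ∘ Tuple.sort t) ((Tuple.sort t)⁻¹ i) := by
        simpa using h1
      exact hsm.lt_iff_lt.mp h2
    · intro hodd
      have h1 : t i < t j :=
        lt_of_le_of_ne ((hpat i j hji).2 hodd) (fun h => hij (hinj h))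
      have h2 : (t ∘ Tuple.sort t) ((Tuple.sort t)⁻¹ i) < (t ∘ Tuple.sort t) ((Tuple.sort t)⁻¹ j) := by
        simpa using h1
      exact hsm.lt_iff_lt.mp h2
  · rintro ⟨σ, halt, hmem⟩
    have hsm : StrictMono (t ∘ σ) := strictMono_of_mem hmem
    refine ⟨⟨hmem.1, ?_⟩, injective_of_mem hmem⟩
    intro i j hji
    constructor
    · intro hev
      have h1 : σ⁻¹ j < σ⁻¹ i := (halt i j hji).1 hev
      have h2 := hsm h1
      simp only [Function.comp_apply, Equiv.Perm.inv_def, Equiv.apply_symm_apply] at h2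
      exact le_of_lt h2
    · intro hodd
      have h1 : σ⁻¹ i < σ⁻¹ j := (halt i j hji).2 hodd
      have h2 := hsm h1
      simp only [Function.comp_apply, Equiv.Perm.inv_def, Equiv.apply_symm_apply] at h2
      exact le_of_lt h2

lemma volume_inter_inj (s : Set (Fin d → ℝ)) :
    volume (s ∩ {t | Function.Injective t}) = volume s := by
  refine le_antisymm (measure_mono Set.inter_subset_left) ?_
  have hsub : s ⊆ (s ∩ {t | Function.Injective t}) ∪ {t : Fin d → ℝ | ¬ Function.Injective t} := by
    intro t ht
    by_cases h : Function.Injective t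
    · exact Or.inl ⟨ht, h⟩
    · exact Or.inr h
  calc volume s ≤ volume ((s ∩ {t | Function.Injective t}) ∪
        {t : Fin d → ℝ | ¬ Function.Injective t}) := measure_mono hsub
    _ ≤ volume (s ∩ {t | Function.Injective t}) +
        volume {t : Fin d → ℝ | ¬ Function.Injective t} := measure_union_le _ _
    _ = volume (s ∩ {t | Function.Injective t}) := by rw [volume_noninj, add_zero]

open Classical in
lemma volume_R :
    volume (R d) = (Nat.card {σ : Equiv.Perm (Fin d) // IsAlternating σ} : ENNReal) *
      ((d.factorial : ENNReal))⁻¹ := by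
  classical
  rw [← volume_inter_inj (R d), R_inter_inj]
  have hU : (⋃ (σ : Equiv.Perm (Fin d)) (_ : IsAlternating σ⁻¹), simplex σ)
      = ⋃ σ ∈ Finset.univ.filter (fun σ : Equiv.Perm (Fin d) => IsAlternating σ⁻¹), simplex σ := by
    ext t; simp
  rw [hU, measure_biUnion_finset ?hdisj (fun σ _ => measurableSet_simplex σ)]
  case hdisj =>
    intro σ _ τ _ hστ
    exact pairwise_disjoint_simplex hστ
  have hsum : ∑ σ ∈ Finset.univ.filter (fun σ : Equiv.Perm (Fin d) => IsAlternating σ⁻¹),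
      volume (simplex σ)
      = (Finset.univ.filter (fun σ : Equiv.Perm (Fin d) => IsAlternating σ⁻¹)).card •
        ((d.factorial : ENNReal))⁻¹ := by
    rw [← Finset.sum_const]
    exact Finset.sum_congr rfl fun σ _ => volume_simplex σ
  rw [hsum, nsmul_eq_mul]
  congr 1
  norm_cast
  rw [Nat.card_eq_fintype_card, Fintype.card_subtype]
  refine Finset.card_bij (fun σ _ => σ⁻¹) ?_ ?_ ?_
  · intro σ hσ
    simp only [Finset.mem_filter, Finset.mem_univ, true_and] at hσ ⊢
    exact hσ
  · intro σ hσ τ hτ h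
    exact inv_injective h
  · intro τ hτ
    simp only [Finset.mem_filter, Finset.mem_univ, true_and] at hτ
    exact ⟨τ⁻¹, by simp [hτ], by simp⟩

end Stmt10Aux

theorem stmt10' (d : ℕ) (_hd : 1 ≤ d) :
    MeasureTheory.volume
      {x : Fin d → ℝ | (∀ i, 0 ≤ x i ∧ x i ≤ 1) ∧
        ∀ i j : Fin d, (j : ℕ) = (i : ℕ) + 1 → x i + x j ≤ 1}
      = ((Nat.card {σ : Equiv.Perm (Fin d) // IsAlternating σ}) : ENNReal)
        / (Nat.factorial d : ENNReal) := by
  classical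
  open Stmt10Aux MeasureTheory in
  set Tc : Fin d → ℝ → ℝ := fun i => if (i:ℕ) % 2 = 0 then (fun x => 1 - x) else id with hTc
  have hTcmp : ∀ i : Fin d, MeasurePreserving (Tc i) volume volume := by
    intro i
    by_cases h : (i:ℕ) % 2 = 0
    · simp only [hTc, h, if_true]
      have := (measurePreserving_add_left (volume : Measure ℝ) 1).comp
        (Measure.measurePreserving_neg (volume : Measure ℝ))
      have heq : ((fun x : ℝ => 1 + x) ∘ fun x : ℝ => -x) = fun x : ℝ => 1 - x := by
        funext x; simp [sub_eq_add_neg]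
      rwa [heq] at this
    · simp only [hTc, h, if_false]
      exact MeasurePreserving.id _
  have hT : MeasurePreserving (fun x : Fin d → ℝ => fun i => Tc i (x i)) volume volume :=
    volume_preserving_pi hTcmp
  have hval0 : ∀ (x : Fin d → ℝ) (i : Fin d), (i:ℕ) % 2 = 0 → Tc i (x i) = 1 - x i := by
    intro x i h; simp [hTc, h]
  have hval1 : ∀ (x : Fin d → ℝ) (i : Fin d), (i:ℕ) % 2 = 1 → Tc i (x i) = x i := by
    intro x i h; simp [hTc, h]
  have hpre : {x : Fin d → ℝ | (∀ i, 0 ≤ x i ∧ x i ≤ 1) ∧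
        ∀ i j : Fin d, (j : ℕ) = (i : ℕ) + 1 → x i + x j ≤ 1}
      = (fun x : Fin d → ℝ => fun i => Tc i (x i)) ⁻¹' R d := by
    ext x
    simp only [Set.mem_preimage, R, Set.mem_setOf_eq]
    constructor
    · rintro ⟨hbd, hsum⟩
      constructor
      · intro i
        rcases Nat.mod_two_eq_zero_or_one (i:ℕ) with h | h
        · rw [hval0 x i h]
          have := hbd i
          constructor <;> linarith [this.1, this.2]
        · rw [hval1 x i h]
          exact hbd i
      · intro i j hji
        constructor
        · intro hev
          have hodd : (j:ℕ) % 2 = 1 := by omega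
          rw [hval0 x i hev, hval1 x j hodd]
          have := hsum i j hji
          linarith
        · intro hodd
          have hev : (j:ℕ) % 2 = 0 := by omega
          rw [hval1 x i hodd, hval0 x j hev]
          have := hsum i j hji
          linarith
    · rintro ⟨hbd, hpat⟩
      constructor
      · intro i
        rcases Nat.mod_two_eq_zero_or_one (i:ℕ) with h | h
        · have := hbd i
          rw [hval0 x i h] at this
          constructor <;> linarith [this.1, this.2]
        · have := hbd i
          rwa [hval1 x i h] at this
      · intro i j hji
        rcases Nat.mod_two_eq_zero_or_one (i:ℕ) with h | h
        · have hodd : (j:ℕ) % 2 = 1 := by omega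
          have := (hpat i j hji).1 h
          rw [hval0 x i h, hval1 x j hodd] at this
          linarith
        · have hev : (j:ℕ) % 2 = 0 := by omega
          have := (hpat i j hji).2 h
          rw [hval1 x i h, hval0 x j hev] at this
          linarith
  rw [hpre, hT.measure_preimage measurableSet_R.nullMeasurableSet, volume_R,
    ENNReal.div_eq_inv_mul, mul_comm]


theorem stmt10 (d : ℕ) (hd : 1 ≤ d) :
    MeasureTheory.volume
      {x : Fin d → ℝ | (∀ i, 0 ≤ x i ∧ x i ≤ 1) ∧
        ∀ i j : Fin d, (j : ℕ) = (i : ℕ) + 1 → x i + x j ≤ 1}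
      = (Alt d : ENNReal) / (Nat.factorial d : ENNReal) := by
  rw [show Alt d = Nat.card {σ : Equiv.Perm (Fin d) // IsAlternating σ} from rfl]
  exact stmt10' d hd
end

section
/- Let d ≥ 2 and k ≥ 0 be integers. Then F(d, k) = Σ_{m=0}^{d−2} s_d(m) · C(k + d − m, d), where C(·,·) is the binomial coefficient. -/
/-- `swapStat σ` : the number of values `i` (with `i+1` also a value) such that
`σ⁻¹(i) < σ⁻¹(i+1) − 1`, i.e. `σ⁻¹(i) + 1 < σ⁻¹(i+1)`. -/
noncomputable def swapStat {d : ℕ} (σ : Equiv.Perm (Fin d)) : ℕ :=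
  Nat.card {p : Fin d × Fin d // (p.2 : ℕ) = (p.1 : ℕ) + 1 ∧
    ((σ⁻¹ p.1 : Fin d) : ℕ) + 1 < ((σ⁻¹ p.2 : Fin d) : ℕ)}

/-- `sSwap d m` : the number of alternating permutations `σ` of `{1, …, d}` with
`swapStat σ = m`. -/
noncomputable def sSwap (d m : ℕ) : ℕ :=
  Nat.card {σ : Equiv.Perm (Fin d) // IsAlternating σ ∧ swapStat σ = m}

namespace FibAux

/-- tie-breaking key -/
def key (n : ℕ) : ℤ := if n % 2 = 1 then -(n:ℤ) - 1 else 1 - (n:ℤ)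

lemma key_le (n : ℕ) : key n ≤ 1 - (n:ℤ) := by unfold key; split_ifs <;> omega
lemma key_ge (n : ℕ) : -(n:ℤ) - 1 ≤ key n := by unfold key; split_ifs <;> omega
lemma key_gap {a b : ℕ} (h : a + 2 ≤ b) : key b < key a := by
  unfold key; split_ifs <;> omega
lemma key_inj {a b : ℕ} (h : key a = key b) : a = b := by
  unfold key at h; split_ifs at h <;> omega
lemma key_succ_odd {a : ℕ} (h : a % 2 = 1) : key a < key (a+1) := by
  unfold key; split_ifs <;> omega
lemma key_succ_even {a : ℕ} (h : a % 2 = 0) : key (a+1) < key a := by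
  unfold key; split_ifs <;> omega

variable {d k : ℕ}

/-- the lexicographic sorting key -/
def fkey (z : Fin d → Fin (k+1)) (i : Fin d) : ℤ := ((d:ℤ)+2) * ((z i : ℕ):ℤ) + key (i:ℕ)

lemma fkey_lt_of_lt {z : Fin d → Fin (k+1)} {i j : Fin d} (h : (z i :ℕ) < (z j:ℕ)) :
    fkey z i < fkey z j := by
  unfold fkey
  have hki : key (i:ℕ) ≤ 1 - (i:ℤ) := key_le _
  have hkj : -(j:ℤ) - 1 ≤ key (j:ℕ) := key_ge _
  have hi : (i:ℤ) ≥ 0 := by positivity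
  have hjd : (j:ℤ) < d := by exact_mod_cast j.2
  have h' : ((z i:ℕ):ℤ) + 1 ≤ ((z j:ℕ):ℤ) := by exact_mod_cast h
  nlinarith [mul_le_mul_of_nonneg_left h' (by positivity : (0:ℤ) ≤ (d:ℤ)+2)]

lemma fkey_lt_of_eq {z : Fin d → Fin (k+1)} {i j : Fin d} (h : (z i:ℕ) = (z j:ℕ))
    (h2 : key (i:ℕ) < key (j:ℕ)) : fkey z i < fkey z j := by
  unfold fkey; rw [h]; linarith

lemma le_of_fkey_lt {z : Fin d → Fin (k+1)} {i j : Fin d} (h : fkey z i < fkey z j) :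
    (z i:ℕ) ≤ (z j:ℕ) := by
  by_contra hc
  exact (fkey_lt_of_lt (show (z j:ℕ) < (z i:ℕ) by omega)).asymm h

lemma key_of_fkey_lt {z : Fin d → Fin (k+1)} {i j : Fin d} (h : fkey z i < fkey z j)
    (he : (z i:ℕ) = (z j:ℕ)) : key (i:ℕ) < key (j:ℕ)  := by
  unfold fkey at h; rw [he] at h; linarith

lemma fkey_inj {z : Fin d → Fin (k+1)} : Function.Injective (fkey z) := by
  intro i j h
  rcases lt_trichotomy ((z i:ℕ)) ((z j:ℕ)) with h1 | h1 | h1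
  · exact absurd h (fkey_lt_of_lt h1).ne
  · have h1' : ((z i:ℕ):ℤ) = ((z j:ℕ):ℤ) := by exact_mod_cast h1
    have : key (i:ℕ) = key (j:ℕ) := by unfold fkey at h; rw [h1'] at h; linarith
    exact Fin.ext (key_inj this)
  · exact absurd h.symm (fkey_lt_of_lt h1).ne

section Defs
variable {d k : ℕ}

/-- zigzag condition: z₀ ≥ z₁ ≤ z₂ ≥ … -/
def Zigzag (z : Fin d → Fin (k+1)) : Prop :=
  ∀ i j : Fin d, (j : ℕ) = (i : ℕ) + 1 →
    (((i:ℕ) % 2 = 0 → z j ≤ z i) ∧ ((i:ℕ) % 2 = 1 → z i ≤ z j))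

/-- strictness at positions in `D` -/
def StrictOn (D : Finset ℕ) (t : Fin d → Fin (k+1)) : Prop :=
  ∀ a b : Fin d, (b : ℕ) = (a : ℕ) + 1 → (a : ℕ) ∈ D → t a < t b

/-- the set of swap positions of `σ` -/
def swaps (σ : Equiv.Perm (Fin d)) : Finset ℕ :=
  (Finset.range (d-1)).filter fun r =>
    ∃ a b : Fin d, (a:ℕ) = r ∧ (b:ℕ) = r + 1 ∧ ((σ⁻¹ a : Fin d):ℕ) + 1 < ((σ⁻¹ b : Fin d):ℕ)

lemma mem_swaps_iff {σ : Equiv.Perm (Fin d)} {a b : Fin d} (hab : (b:ℕ) = (a:ℕ)+1) :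
    (a:ℕ) ∈ swaps σ ↔ ((σ⁻¹ a : Fin d):ℕ) + 1 < ((σ⁻¹ b : Fin d):ℕ) := by
  unfold swaps
  rw [Finset.mem_filter, Finset.mem_range]
  constructor
  · rintro ⟨h1, a', b', ha', hb', h2⟩
    have : a' = a := Fin.ext ha'
    have : b' = b := Fin.ext (by omega)
    subst this; subst ‹a' = a›; exact h2
  · intro h2
    refine ⟨by have := b.2; omega, a, b, rfl, hab.symm ▸ rfl, h2⟩

end Defs

section Main
variable {d k : ℕ}

lemma fkey_strictMono_rank {σ : Equiv.Perm (Fin d)} (hσ : IsAlternating σ)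
    {t : Fin d → Fin (k+1)} (ht : Monotone t) (hts : StrictOn (swaps σ) t) :
    StrictMono (fun r => fkey (t ∘ σ) (σ⁻¹ r)) := by
  cases d with
  | zero => intro a; exact a.elim0
  | succ n =>
    rw [Fin.strictMono_iff_lt_succ]
    intro r
    set i := σ⁻¹ r.castSucc with hi
    set j := σ⁻¹ r.succ with hj
    have hzi : (t ∘ σ) i = t r.castSucc := by simp [hi]
    have hzj : (t ∘ σ) j = t r.succ := by simp [hj]
    have hmono : t r.castSucc ≤ t r.succ := ht (Fin.castSucc_lt_succ (i := r)).le
    rcases lt_or_eq_of_le hmono with hlt | heq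
    · exact fkey_lt_of_lt (by rw [hzi, hzj]; exact hlt)
    · -- equal values; r is not a swap position
      have hnot : ¬((i:ℕ) + 1 < (j:ℕ)) := by
        intro hs
        have hmem : ((r.castSucc : Fin (n+1)):ℕ) ∈ swaps σ := by
          rw [mem_swaps_iff (a := r.castSucc) (b := r.succ) (by simp)]
          exact hs
        have := hts r.castSucc r.succ (by simp) hmem
        rw [heq] at this
        exact lt_irrefl _ this
      have hne : i ≠ j := by
        intro h
        have : r.castSucc = r.succ := by
          have := congrArg σ h
          simpa [hi, hj] using this
        simp [Fin.ext_iff] at this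
      have hne' : (i:ℕ) ≠ (j:ℕ) := fun h => hne (Fin.ext h)
      have hσi : σ i = r.castSucc := by simp [hi]
      have hσj : σ j = r.succ := by simp [hj]
      have hσlt : σ i < σ j := by
        rw [hσi, hσj]; exact Fin.castSucc_lt_succ (i := r)
      have hzeq : ((t ∘ σ) i : ℕ) = ((t ∘ σ) j : ℕ) := by rw [hzi, hzj, heq]
      apply fkey_lt_of_eq hzeq
      -- case analysis on position of j relative to i
      rcases lt_trichotomy ((j:ℕ)) ((i:ℕ)+1) with hc | hc | hc
      · -- j ≤ i - 1
        rcases Nat.lt_or_ge ((j:ℕ)+2) ((i:ℕ)+1) with hc2 | hc2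
        · exact key_gap (by omega)
        · -- j = i - 1, so i = j + 1 : adjacent, use alternating at (j,i)
          have hadj : (i:ℕ) = (j:ℕ) + 1 := by omega
          have halt := hσ j i hadj
          have hj2 : (j:ℕ) % 2 = 0 := by
            rcases Nat.mod_two_eq_zero_or_one (j:ℕ) with h2 | h2
            · exact h2
            · exact absurd (halt.2 h2) (by exact fun hh => absurd hσlt hh.asymm)
          have hkj : key (j:ℕ) = 1 - ((j:ℕ):ℤ) := by unfold key; rw [if_neg (by omega)]
          have hki := key_le (i:ℕ)
          have : ((i:ℕ):ℤ) = ((j:ℕ):ℤ) + 1 := by exact_mod_cast hadj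
          omega
      · -- j = i + 1 : adjacent, use alternating at (i,j)
        have halt := hσ i j hc
        have hi2 : (i:ℕ) % 2 = 1 := by
          rcases Nat.mod_two_eq_zero_or_one (i:ℕ) with h2 | h2
          · exact absurd (halt.1 h2) (fun hh => absurd hσlt hh.asymm)
          · exact h2
        rw [hc]
        exact key_succ_odd hi2
      · omega
end Main

section Main2
variable {d k : ℕ}

lemma rank_lt_iff {σ : Equiv.Perm (Fin d)} (hσ : IsAlternating σ)
    {t : Fin d → Fin (k+1)} (ht : Monotone t) (hts : StrictOn (swaps σ) t) (i j : Fin d) :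
    σ i < σ j ↔ fkey (t ∘ σ) i < fkey (t ∘ σ) j := by
  have hsm := fkey_strictMono_rank hσ ht hts
  constructor
  · intro h
    have := hsm h
    simpa using this
  · intro h
    rcases lt_trichotomy (σ i) (σ j) with h1 | h1 | h1
    · exact h1
    · exact absurd (congrArg (fkey (t ∘ σ)) (σ.injective h1)) h.ne
    · have := hsm h1
      simp only [Equiv.Perm.coe_inv, Equiv.symm_apply_apply] at this
      exact absurd h this.asymm

lemma sigma_unique {σ σ' : Equiv.Perm (Fin d)} (hσ : IsAlternating σ) (hσ' : IsAlternating σ')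
    {t t' : Fin d → Fin (k+1)} (ht : Monotone t) (hts : StrictOn (swaps σ) t)
    (ht' : Monotone t') (hts' : StrictOn (swaps σ') t')
    (hz : t ∘ σ = t' ∘ σ') : σ = σ' := by
  have hiff : ∀ i j : Fin d, σ i < σ j ↔ σ' i < σ' j := by
    intro i j
    rw [rank_lt_iff hσ ht hts i j, rank_lt_iff hσ' ht' hts' i j, hz]
  have hsm : StrictMono (fun x => σ' (σ⁻¹ x)) := by
    intro x y hxy
    rw [← hiff]
    simpa using hxy
  have hsm2 : StrictMono (id : Fin d → Fin d) := strictMono_id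
  have hr : Set.range (fun x => σ' (σ⁻¹ x)) = Set.range (id : Fin d → Fin d) := by
    simp only [Set.range_id]
    exact Set.range_eq_univ.2 fun y => ⟨σ (σ'⁻¹ y), by simp⟩
  have := (hsm.range_inj hsm2).1 hr
  ext x
  have h2 := congrFun this (σ x)
  have h3 : σ' x = σ x := by simpa using h2
  simp [h3]

/-- the rank permutation of `z` : sends position to its rank -/
noncomputable def rankPerm (z : Fin d → Fin (k+1)) : Equiv.Perm (Fin d) :=
  (Tuple.sort (fkey z))⁻¹

lemma rankPerm_lt_iff (z : Fin d → Fin (k+1)) (i j : Fin d) :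
    rankPerm z i < rankPerm z j ↔ fkey z i < fkey z j := by
  have hmono : Monotone (fkey z ∘ Tuple.sort (fkey z)) := Tuple.monotone_sort (fkey z)
  have hinj : Function.Injective (fkey z ∘ Tuple.sort (fkey z)) :=
    fkey_inj.comp (Tuple.sort (fkey z)).injective
  have hsm : StrictMono (fkey z ∘ Tuple.sort (fkey z)) := hmono.strictMono_of_injective hinj
  have h1 : ∀ i : Fin d, (fkey z ∘ Tuple.sort (fkey z)) (rankPerm z i) = fkey z i := by
    intro i; simp [rankPerm]
  rw [← h1 i, ← h1 j]
  exact (hsm.lt_iff_lt).symm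

lemma rankPerm_alternating {z : Fin d → Fin (k+1)} (hz : Zigzag z) :
    IsAlternating (rankPerm z) := by
  intro i j hij
  have hzz := hz i j hij
  constructor
  · intro h2
    rw [rankPerm_lt_iff]
    have hle : (z j : ℕ) ≤ (z i : ℕ) := hzz.1 h2
    rcases lt_or_eq_of_le hle with hlt | heqv
    · exact fkey_lt_of_lt hlt
    · exact fkey_lt_of_eq heqv (by rw [hij]; exact key_succ_even h2)
  · intro h2
    rw [rankPerm_lt_iff]
    have hle : (z i : ℕ) ≤ (z j : ℕ) := hzz.2 h2
    rcases lt_or_eq_of_le hle with hlt | heqv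
    · exact fkey_lt_of_lt hlt
    · exact fkey_lt_of_eq heqv (by rw [hij]; exact key_succ_odd h2)

lemma rankPerm_t_monotone (z : Fin d → Fin (k+1)) :
    Monotone (z ∘ ⇑(rankPerm z)⁻¹) := by
  intro r r' hrr
  rcases lt_or_eq_of_le hrr with hlt | heq
  · have : rankPerm z ((rankPerm z)⁻¹ r) < rankPerm z ((rankPerm z)⁻¹ r') := by
      simpa using hlt
    rw [rankPerm_lt_iff] at this
    show z ((rankPerm z)⁻¹ r) ≤ z ((rankPerm z)⁻¹ r')
    exact Fin.le_def.2 (le_of_fkey_lt this)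
  · rw [heq]

lemma rankPerm_t_strictOn (z : Fin d → Fin (k+1)) :
    StrictOn (swaps (rankPerm z)) (z ∘ ⇑(rankPerm z)⁻¹) := by
  intro a b hab hmem
  rw [mem_swaps_iff hab] at hmem
  set A := (rankPerm z)⁻¹ a
  set B := (rankPerm z)⁻¹ b
  have hAB : rankPerm z A < rankPerm z B := by
    show rankPerm z ((rankPerm z)⁻¹ a) < rankPerm z ((rankPerm z)⁻¹ b)
    simp only [Equiv.Perm.coe_inv, Equiv.apply_symm_apply]
    exact Fin.lt_def.2 (by omega)
  rw [rankPerm_lt_iff] at hAB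
  have hle : (z A : ℕ) ≤ (z B : ℕ) := le_of_fkey_lt hAB
  rcases lt_or_eq_of_le hle with hlt | heqv
  · exact Fin.lt_def.2 hlt
  · exfalso
    have hkey := key_of_fkey_lt hAB heqv
    exact absurd hkey (key_gap (by omega)).asymm

lemma rankPerm_comp (z : Fin d → Fin (k+1)) :
    (z ∘ ⇑(rankPerm z)⁻¹) ∘ (rankPerm z) = z := by
  funext i; simp

end Main2

section Count
variable {d k : ℕ}

lemma strictMono_card {a N : ℕ} :
    Nat.card {u : Fin a → Fin N // StrictMono u} = N.choose a := by
  have hbij : Function.Bijective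
      (fun u : {u : Fin a → Fin N // StrictMono u} =>
        (⟨Finset.image u.1 Finset.univ, by
          rw [Finset.card_image_of_injective _ u.2.injective, Finset.card_univ,
            Fintype.card_fin]⟩ : {s : Finset (Fin N) // s.card = a})) := by
    constructor
    · rintro ⟨u, hu⟩ ⟨u', hu'⟩ h
      simp only [Subtype.mk.injEq] at h
      have hr : Set.range u = Set.range u' := by
        rw [← Set.image_univ, ← Set.image_univ, ← Finset.coe_univ, ← Finset.coe_image,
          ← Finset.coe_image, h]
      exact Subtype.ext ((hu.range_inj hu').1 hr)
    · rintro ⟨s, hs⟩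
      refine ⟨⟨fun i => s.orderEmbOfFin hs i, (s.orderEmbOfFin hs).strictMono⟩, ?_⟩
      refine Subtype.ext ?_
      apply Finset.coe_injective
      rw [Finset.coe_image, Finset.coe_univ, Set.image_univ]
      exact Finset.range_orderEmbOfFin s hs
  rw [Nat.card_congr (Equiv.ofBijective _ hbij)]
  rw [Nat.card_eq_fintype_card, Fintype.card_subtype]
  have : Finset.univ.filter (fun s : Finset (Fin N) => s.card = a)
      = Finset.powersetCard a Finset.univ := by
    ext s; simp [Finset.mem_powersetCard_univ]
  rw [this, Finset.card_powersetCard, Finset.card_univ, Fintype.card_fin]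

/-- number of weak positions before r -/
def cfun (D : Finset ℕ) (r : ℕ) : ℕ := ((Finset.range r).filter (fun x => x ∉ D)).card

lemma cfun_succ_mem {D : Finset ℕ} {r : ℕ} (h : r ∈ D) : cfun D (r+1) = cfun D r := by
  unfold cfun
  rw [Finset.range_add_one, Finset.filter_insert, if_neg (by simp [h])]

lemma cfun_succ_not_mem {D : Finset ℕ} {r : ℕ} (h : r ∉ D) : cfun D (r+1) = cfun D r + 1 := by
  unfold cfun
  rw [Finset.range_add_one, Finset.filter_insert, if_pos (by simp [h]),
    Finset.card_insert_of_notMem (by simp)]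

lemma cfun_le (D : Finset ℕ) (r : ℕ) : cfun D r ≤ r := by
  calc cfun D r ≤ (Finset.range r).card := Finset.card_filter_le _ _
  _ = r := Finset.card_range r

lemma cfun_ge (D : Finset ℕ) (r : ℕ) : r - D.card ≤ cfun D r := by
  unfold cfun
  have h1 : (Finset.range r).filter (fun x => x ∈ D) ⊆ D :=
    fun x hx => (Finset.mem_filter.1 hx).2
  have h2 := Finset.card_le_card h1
  have h3 : ((Finset.range r).filter (fun x => x ∉ D)).card
      = r - ((Finset.range r).filter (fun x => x ∈ D)).card := by
    rw [Finset.filter_not, Finset.card_sdiff_of_subset (Finset.filter_subset _ _), Finset.card_range]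
  omega

lemma cfun_le_of_subset {D : Finset ℕ} {n : ℕ} (hD : D ⊆ Finset.range n) {r : ℕ} (hr : r ≤ n) :
    cfun D r ≤ n - D.card := by
  unfold cfun
  have h1 : (Finset.range r).filter (fun x => x ∉ D) ⊆ (Finset.range n).filter (fun x => x ∉ D) :=
    Finset.filter_subset_filter _ (Finset.range_subset_range.2 hr)
  have h2 := Finset.card_le_card h1
  have h4 : (Finset.range n).filter (fun x => x ∈ D) = D := by
    apply Finset.Subset.antisymm
    · exact fun x hx => (Finset.mem_filter.1 hx).2
    · intro x hx; exact Finset.mem_filter.2 ⟨hD hx, hx⟩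
  have h3 : ((Finset.range n).filter (fun x => x ∉ D)).card
      = n - ((Finset.range n).filter (fun x => x ∈ D)).card := by
    rw [Finset.filter_not, Finset.card_sdiff_of_subset (Finset.filter_subset _ _), Finset.card_range]
  rw [h4] at h3
  omega

lemma cfun_mono (D : Finset ℕ) : Monotone (cfun D) := by
  intro a b h
  exact Finset.card_le_card (Finset.filter_subset_filter _ (Finset.range_subset_range.2 h))

lemma strictMono_add_le {n N : ℕ} {u : Fin n → Fin N} (hu : StrictMono u) :
    ∀ m : ℕ, ∀ x y : Fin n, (y:ℕ) = (x:ℕ) + m → (u x : ℕ) + m ≤ (u y : ℕ) := by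
  intro m
  induction m with
  | zero => intro x y h; have : y = x := Fin.ext h; rw [this]; omega
  | succ p ih =>
    intro x y h
    have hy' : (x:ℕ) + p < n := by have := y.2; omega
    have h1 := ih x ⟨(x:ℕ)+p, hy'⟩ rfl
    have h2 : u ⟨(x:ℕ)+p, hy'⟩ < u y := hu (Fin.lt_def.2 (by simp; omega))
    rw [Fin.lt_def] at h2
    omega

lemma strictMono_le_apply {n N : ℕ} {u : Fin n → Fin N} (hu : StrictMono u) (x : Fin n) :
    (x:ℕ) ≤ (u x : ℕ) := by
  have h0 : (0:ℕ) < n := x.pos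
  have := strictMono_add_le hu (x:ℕ) ⟨0, h0⟩ x (by simp)
  omega

end Count

section Count2
variable {d k : ℕ}

lemma strictMono_of_adjacent {n : ℕ} {α : Type*} [Preorder α] {f : Fin n → α}
    (h : ∀ a b : Fin n, (b:ℕ) = (a:ℕ)+1 → f a < f b) : StrictMono f := by
  have key : ∀ m : ℕ, ∀ x y : Fin n, (y:ℕ) = (x:ℕ) + m + 1 → f x < f y := by
    intro m
    induction m with
    | zero => intro x y hxy; exact h x y hxy
    | succ p ih =>
      intro x y hxy
      have hmid : (x:ℕ) + p + 1 < n := by have := y.2; omega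
      exact lt_trans (ih x ⟨(x:ℕ)+p+1, hmid⟩ rfl) (h _ y (by simp; omega))
  intro x y hxy
  have hv : (x:ℕ) < (y:ℕ) := hxy
  exact key ((y:ℕ) - (x:ℕ) - 1) x y (by omega)

lemma cfun_diff_le (D : Finset ℕ) {x y : ℕ} (h : x ≤ y) : cfun D y ≤ cfun D x + (y - x) := by
  unfold cfun
  have hsub : (Finset.range y).filter (fun a => a ∉ D) ⊆
      (Finset.range x).filter (fun a => a ∉ D) ∪ Finset.Ico x y := by
    intro z hz
    rw [Finset.mem_filter, Finset.mem_range] at hz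
    rcases Nat.lt_or_ge z x with h1 | h1
    · exact Finset.mem_union_left _ (Finset.mem_filter.2 ⟨Finset.mem_range.2 h1, hz.2⟩)
    · exact Finset.mem_union_right _ (Finset.mem_Ico.2 ⟨h1, hz.1⟩)
  calc ((Finset.range y).filter (fun a => a ∉ D)).card
      ≤ ((Finset.range x).filter (fun a => a ∉ D) ∪ Finset.Ico x y).card :=
        Finset.card_le_card hsub
    _ ≤ ((Finset.range x).filter (fun a => a ∉ D)).card + (Finset.Ico x y).card :=
        Finset.card_union_le _ _
    _ = ((Finset.range x).filter (fun a => a ∉ D)).card + (y - x) := by rw [Nat.card_Ico]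

lemma T_card {D : Finset ℕ} (hD : D ⊆ Finset.range (d-1)) (hd : 1 ≤ d) :
    Nat.card {t : Fin d → Fin (k+1) // Monotone t ∧ StrictOn D t}
      = (k + d - D.card).choose d := by
  have hcard : D.card ≤ d - 1 := by
    have := Finset.card_le_card hD; rwa [Finset.card_range] at this
  set N := k + (d - 1 - D.card) + 1 with hN
  have hNval : k + d - D.card = N := by omega
  -- the bijection to strictly monotone maps
  have hbound : ∀ (t : Fin d → Fin (k+1)) (r : Fin d), (t r : ℕ) + cfun D (r:ℕ) < N := by
    intro t r
    have h1 : (t r : ℕ) ≤ k := by have := (t r).2; omega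
    have h2 : cfun D (r:ℕ) ≤ d - 1 - D.card := by
      have := cfun_le_of_subset hD (show (r:ℕ) ≤ d - 1 by have := r.2; omega)
      omega
    omega
  have hbij : Function.Bijective
      (fun t : {t : Fin d → Fin (k+1) // Monotone t ∧ StrictOn D t} =>
        (⟨fun r => ⟨(t.1 r : ℕ) + cfun D (r:ℕ), hbound t.1 r⟩, by
          apply strictMono_of_adjacent
          intro a b hab
          rw [Fin.lt_def]
          simp only []
          have hmono : (t.1 a : ℕ) ≤ (t.1 b : ℕ) := t.2.1 (Fin.le_def.2 (by omega))
          by_cases hmem : (a:ℕ) ∈ D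
          · have hstrict : (t.1 a : ℕ) < (t.1 b : ℕ) := t.2.2 a b hab hmem
            have := cfun_mono D (show (a:ℕ) ≤ (b:ℕ) by omega)
            omega
          · rw [hab, cfun_succ_not_mem hmem]
            omega⟩ : {u : Fin d → Fin N // StrictMono u})) := by
    constructor
    · rintro ⟨t, ht⟩ ⟨t', ht'⟩ h
      simp only [Subtype.mk.injEq] at h
      refine Subtype.ext (funext fun r => Fin.ext ?_)
      have h2 : ((t r : ℕ) + cfun D (r:ℕ)) = ((t' r : ℕ) + cfun D (r:ℕ)) := by
        have := congrFun h r
        simpa [Fin.ext_iff] using this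
      show (t r : ℕ) = (t' r : ℕ)
      omega
    · rintro ⟨u, hu⟩
      have hb2 : ∀ r : Fin d, (u r : ℕ) - cfun D (r:ℕ) < k + 1 := by
        intro r
        have hlast : (d - 1) < d := by omega
        have h1 := strictMono_add_le hu ((d-1) - (r:ℕ)) r ⟨d-1, hlast⟩
          (by simp; have := r.2; omega)
        have h2 : (u ⟨d-1, hlast⟩ : ℕ) < N := (u _).2
        have h3 := cfun_ge D (r:ℕ)
        have := r.2
        omega
      have hcle : ∀ r : Fin d, cfun D (r:ℕ) ≤ (u r : ℕ) := by
        intro r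
        exact le_trans (cfun_le D (r:ℕ)) (strictMono_le_apply hu r)
      refine ⟨⟨fun r => ⟨(u r : ℕ) - cfun D (r:ℕ), hb2 r⟩, ?_, ?_⟩, ?_⟩
      · -- Monotone
        intro x y hxy
        rw [Fin.le_def]
        simp only []
        have h1 := strictMono_add_le hu ((y:ℕ) - (x:ℕ)) x y (by rw [Fin.le_def] at hxy; omega)
        have h2 := cfun_diff_le D (show (x:ℕ) ≤ (y:ℕ) from hxy)
        omega
      · -- StrictOn
        intro a b hab hmem
        rw [Fin.lt_def]
        simp only []
        have h1 := strictMono_add_le hu 1 a b (by omega)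
        have h2 : cfun D (b:ℕ) = cfun D (a:ℕ) := by rw [hab]; exact cfun_succ_mem hmem
        have := hcle a
        omega
      · refine Subtype.ext (funext fun r => Fin.ext ?_)
        simp only []
        have := hcle r
        omega
  rw [Nat.card_congr (Equiv.ofBijective _ hbij), strictMono_card, hNval]

end Count2

section Swaps
variable {d k : ℕ}

lemma swaps_card_eq_swapStat (σ : Equiv.Perm (Fin d)) : (swaps σ).card = swapStat σ := by
  classical
  unfold swapStat
  have hbij : Function.Bijective
      (fun p : {p : Fin d × Fin d // (p.2 : ℕ) = (p.1 : ℕ) + 1 ∧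
          ((σ⁻¹ p.1 : Fin d) : ℕ) + 1 < ((σ⁻¹ p.2 : Fin d) : ℕ)} =>
        (⟨(p.1.1 : ℕ), by rw [mem_swaps_iff p.2.1]; exact p.2.2⟩ : {r // r ∈ swaps σ})) := by
    constructor
    · rintro ⟨⟨a, b⟩, hab, h2⟩ ⟨⟨a', b'⟩, hab', h2'⟩ h
      simp only [Subtype.mk.injEq] at h
      refine Subtype.ext ?_
      simp only at h hab hab' ⊢
      have ha : a = a' := Fin.ext h
      have hb : b = b' := Fin.ext (by omega)
      rw [ha, hb]
    · rintro ⟨r, hr⟩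
      have hrd : r < d - 1 := Finset.mem_range.1 (Finset.mem_filter.1 hr).1
      refine ⟨⟨(⟨r, by omega⟩, ⟨r+1, by omega⟩), rfl, ?_⟩, rfl⟩
      exact (mem_swaps_iff (a := (⟨r, by omega⟩ : Fin d)) (b := ⟨r+1, by omega⟩) rfl).1 hr
  rw [Nat.card_congr (Equiv.ofBijective _ hbij), Nat.card_eq_fintype_card,
    Fintype.card_coe]

lemma swapStat_lt (hd : 2 ≤ d) (σ : Equiv.Perm (Fin d)) : swapStat σ < d - 1 := by
  rw [← swaps_card_eq_swapStat]
  have hne : swaps σ ≠ Finset.range (d-1) := by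
    intro hall
    have key : ∀ r : ℕ, r < d → ∀ h : r < d, 2 * r ≤ ((σ⁻¹ ⟨r, h⟩ : Fin d) : ℕ) := by
      intro r
      induction r with
      | zero => intro _ _; omega
      | succ p ih =>
        intro hpd h
        have hp1 : p < d - 1 := by omega
        have hmem : p ∈ swaps σ := by rw [hall]; exact Finset.mem_range.2 hp1
        have hpd' : p < d := by omega
        have := (mem_swaps_iff (a := (⟨p, hpd'⟩ : Fin d)) (b := ⟨p+1, h⟩) rfl).1 hmem
        have := ih hpd' hpd'
        omega
    have hlast : d - 1 < d := by omega
    have h1 := key (d-1) hlast hlast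
    have h2 := (σ⁻¹ (⟨d-1, hlast⟩ : Fin d)).2
    omega
  have hss : swaps σ ⊂ Finset.range (d-1) :=
    lt_of_le_of_ne (Finset.filter_subset _ _) hne
  have := Finset.card_lt_card hss
  rwa [Finset.card_range] at this

end Swaps

section FibEquiv
variable {d k : ℕ}

lemma fibPts_eq_zigzag_card (d k : ℕ) :
    FibPts d k = Nat.card {z : Fin d → Fin (k+1) // Zigzag z} := by
  unfold FibPts
  rw [← Nat.card_coe_set_eq]
  apply Nat.card_congr
  refine Equiv.ofBijective (fun x =>
    (⟨fun i => ⟨if (i:ℕ) % 2 = 0 then ((k:ℤ) - x.1 i).toNat else (x.1 i).toNat, by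
        have h1 := x.2.1 i
        split_ifs <;> omega⟩, ?_⟩ : {z : Fin d → Fin (k+1) // Zigzag z})) ?_
  · -- Zigzag
    intro i j hij
    obtain ⟨x, hx⟩ := x
    have hxi := hx.1 i
    have hxj := hx.1 j
    have hsum := hx.2 i j hij
    have hpar : (j:ℕ) % 2 = ((i:ℕ) + 1) % 2 := by rw [hij]
    constructor
    · intro hev
      rw [Fin.le_def]
      show (if (j:ℕ) % 2 = 0 then ((k:ℤ) - x j).toNat else (x j).toNat)
        ≤ (if (i:ℕ) % 2 = 0 then ((k:ℤ) - x i).toNat else (x i).toNat)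
      split_ifs <;> omega
    · intro hodd
      rw [Fin.le_def]
      show (if (i:ℕ) % 2 = 0 then ((k:ℤ) - x i).toNat else (x i).toNat)
        ≤ (if (j:ℕ) % 2 = 0 then ((k:ℤ) - x j).toNat else (x j).toNat)
      split_ifs <;> omega
  · constructor
    · rintro ⟨x, hx⟩ ⟨x', hx'⟩ h
      simp only [Subtype.mk.injEq] at h
      refine Subtype.ext (funext fun i => ?_)
      have h1 := congrFun h i
      rw [Fin.mk.injEq] at h1
      have hxi := hx.1 i
      have hx'i := hx'.1 i
      simp only at h1 hxi hx'i ⊢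
      split_ifs at h1 <;> omega
    · rintro ⟨z, hz⟩
      refine ⟨⟨fun i => if (i:ℕ) % 2 = 0 then (k:ℤ) - ((z i : ℕ):ℤ) else ((z i : ℕ):ℤ), ?_, ?_⟩, ?_⟩
      · intro i
        have := (z i).2
        simp only []
        split_ifs <;> constructor <;> [omega; omega; omega; omega]
      · intro i j hij
        have hzz := hz i j hij
        have hzi := (z i).2
        have hzj := (z j).2
        simp only []
        rcases Nat.mod_two_eq_zero_or_one (i:ℕ) with hev | hodd
        · have hle : (z j : ℕ) ≤ (z i : ℕ) := Fin.le_def.1 (hzz.1 hev)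
          have hjodd : ¬((j:ℕ) % 2 = 0) := by omega
          rw [if_pos hev, if_neg hjodd]
          omega
        · have hle : (z i : ℕ) ≤ (z j : ℕ) := Fin.le_def.1 (hzz.2 hodd)
          have hjev : (j:ℕ) % 2 = 0 := by omega
          rw [if_neg (by omega), if_pos hjev]
          omega
      · refine Subtype.ext (funext fun i => Fin.ext ?_)
        have := (z i).2
        simp only []
        split_ifs <;> omega

end FibEquiv

section Assembly
variable {d k : ℕ}

lemma zigzag_card_eq (d k : ℕ) :
    Nat.card {z : Fin d → Fin (k+1) // Zigzag z}
      = Nat.card (Σ σ : {σ : Equiv.Perm (Fin d) // IsAlternating σ},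
          {t : Fin d → Fin (k+1) // Monotone t ∧ StrictOn (swaps σ.1) t}) := by
  apply Nat.card_congr
  symm
  refine Equiv.ofBijective (fun p => (⟨p.2.1 ∘ p.1.1, ?_⟩ : {z : Fin d → Fin (k+1) // Zigzag z})) ?_
  · -- Zigzag of t ∘ σ
    intro i j hij
    obtain ⟨⟨σ, hσ⟩, ⟨t, ht, hts⟩⟩ := p
    have halt := hσ i j hij
    constructor
    · intro hev
      exact ht (halt.1 hev).le
    · intro hodd
      exact ht (halt.2 hodd).le
  · constructor
    · rintro ⟨⟨σ, hσ⟩, ⟨t, ht, hts⟩⟩ ⟨⟨σ', hσ'⟩, ⟨t', ht', hts'⟩⟩ h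
      simp only [Subtype.mk.injEq] at h
      replace h := congrArg Subtype.val h
      have hss : σ = σ' := sigma_unique hσ hσ' ht hts ht' hts' h
      subst hss
      have htt : t = t' := by
        funext r
        have := congrFun h (σ⁻¹ r)
        simpa using this
      subst htt
      rfl
    · rintro ⟨z, hz⟩
      refine ⟨⟨⟨rankPerm z, rankPerm_alternating hz⟩,
        ⟨z ∘ ⇑(rankPerm z)⁻¹, rankPerm_t_monotone z, rankPerm_t_strictOn z⟩⟩, ?_⟩
      exact Subtype.ext (rankPerm_comp z)

end Assembly

end FibAux

theorem stmt11 (d k : ℕ) (hd : 2 ≤ d) :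
    FibPts d k = ∑ m ∈ Finset.range (d-1), sSwap d m * Nat.choose (k + d - m) d := by
  classical
  rw [FibAux.fibPts_eq_zigzag_card d k, FibAux.zigzag_card_eq d k,
    Nat.card_eq_fintype_card, Fintype.card_sigma]
  have hterm : ∀ σ' : {σ : Equiv.Perm (Fin d) // IsAlternating σ},
      Fintype.card {t : Fin d → Fin (k+1) // Monotone t ∧ FibAux.StrictOn (FibAux.swaps σ'.1) t}
        = (k + d - swapStat σ'.1).choose d := by
    intro σ'
    rw [← Nat.card_eq_fintype_card,
      FibAux.T_card (D := FibAux.swaps σ'.1)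
        (by unfold FibAux.swaps; exact Finset.filter_subset _ _) (by omega),
      FibAux.swaps_card_eq_swapStat]
  rw [Finset.sum_congr rfl (fun σ' _ => hterm σ')]
  rw [← Finset.sum_subtype (Finset.univ.filter IsAlternating) (by simp)
    (fun σ => (k + d - swapStat σ).choose d)]
  rw [← Finset.sum_fiberwise_of_maps_to (t := Finset.range (d-1)) (g := swapStat)
    (fun σ _ => Finset.mem_range.2 (FibAux.swapStat_lt hd σ))
    (fun σ => (k + d - swapStat σ).choose d)]
  apply Finset.sum_congr rfl
  intro m hm
  have hinner : ∀ σ ∈ ((Finset.univ : Finset (Equiv.Perm (Fin d))).filter IsAlternating).filter (fun σ => swapStat σ = m),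
      (k + d - swapStat σ).choose d = (k + d - m).choose d := by
    intro σ hσ
    rw [(Finset.mem_filter.1 hσ).2]
  have hsum : ∑ σ ∈ ((Finset.univ : Finset (Equiv.Perm (Fin d))).filter
        IsAlternating).filter (fun σ => swapStat σ = m),
      (k + d - swapStat σ).choose d
      = (((Finset.univ : Finset (Equiv.Perm (Fin d))).filter
          IsAlternating).filter (fun σ => swapStat σ = m)).card
        * (k + d - m).choose d := by
    rw [Finset.sum_congr rfl hinner, Finset.sum_const, smul_eq_mul]
  rw [hsum]
  congr 1
  unfold sSwap
  rw [Nat.card_eq_fintype_card, Fintype.card_subtype, Finset.filter_filter]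
end
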